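/- arXiv:1308.6390 — 3 statements merged into one kernel-verified Lean document; each statement's English description precedes it below -/
import Mathlib

section
/- Let p ∈ P(k,k) be projective with through-block decomposition p = p_u* p_u, and let q ∈ P(k,k) satisfy pq = q = qp and t(q) = t(p). Then there exists a through-partition r ∈ P_2(t(p), t(p)) such that q = p_u* r p_u. -/
/-- A two-row partition with `k` upper and `l` lower points, encoded as the
equivalence relation whose classes are the blocks. -/
abbrev PP (k l : ℕ) := Setoid (Fin k ⊕ Fin l)

/-- The involution `p*` (turning `p` upside down). -/
def swapP {k l : ℕ} (p : PP k l) : PP l k := Setoid.comap Sum.swap p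

/-- Disjoint union of two setoids. -/
def sumSetoid {α β : Type*} (s : Setoid α) (t : Setoid β) : Setoid (α ⊕ β) where
  r := Sum.LiftRel s.r t.r
  iseqv := by
    refine ⟨fun x => ?_, fun {x y} h => ?_, fun {x y z} h1 h2 => ?_⟩
    · cases x with
      | inl a => exact Sum.LiftRel.inl (s.iseqv.refl a)
      | inr b => exact Sum.LiftRel.inr (t.iseqv.refl b)
    · cases h with
      | inl h => exact Sum.LiftRel.inl (s.iseqv.symm h)
      | inr h => exact Sum.LiftRel.inr (t.iseqv.symm h)
    · cases h1 with
      | inl h1 =>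
        cases h2 with
        | inl h2 => exact Sum.LiftRel.inl (s.iseqv.trans h1 h2)
      | inr h1 =>
        cases h2 with
        | inr h2 => exact Sum.LiftRel.inr (t.iseqv.trans h1 h2)

/-- Reindexing equivalence for the horizontal concatenation (tensor product). -/
def tensorEquiv (k l k' l' : ℕ) :
    (Fin (k + k') ⊕ Fin (l + l')) ≃ ((Fin k ⊕ Fin l) ⊕ (Fin k' ⊕ Fin l')) :=
  (Equiv.sumCongr finSumFinEquiv.symm finSumFinEquiv.symm).trans
    (Equiv.sumSumSumComm (Fin k) (Fin k') (Fin l) (Fin l'))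

/-- Tensor product (horizontal concatenation) of partitions. -/
def tensorP {k l k' l' : ℕ} (p : PP k l) (q : PP k' l') : PP (k + k') (l + l') :=
  Setoid.comap (tensorEquiv k l k' l') (sumSetoid p q)

/-- The relation on `k ⊔ l ⊔ m` points generated by `p` (upper part) and `q` (lower part). -/
def midRel {k l m : ℕ} (p : PP k l) (q : PP l m) :
    (Fin k ⊕ (Fin l ⊕ Fin m)) → (Fin k ⊕ (Fin l ⊕ Fin m)) → Prop := fun x y =>
  (∃ a b : Fin k ⊕ Fin l, p.r a b ∧ x = Sum.map id Sum.inl a ∧ y = Sum.map id Sum.inl b) ∨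
  (∃ a b : Fin l ⊕ Fin m, q.r a b ∧ x = Sum.inr a ∧ y = Sum.inr b)

/-- The equivalence relation generated on `k ⊔ l ⊔ m` in the composition procedure. -/
def bigS {k l m : ℕ} (p : PP k l) (q : PP l m) : Setoid (Fin k ⊕ (Fin l ⊕ Fin m)) :=
  Relation.EqvGen.setoid (midRel p q)

/-- `compP q p` is the vertical composition `qp` (apply `p : P(k,l)` first, then `q : P(l,m)`). -/
def compP {k l m : ℕ} (q : PP l m) (p : PP k l) : PP k m :=
  Setoid.comap (Sum.map id Sum.inr) (bigS p q)

/-- `rlP q p` : the number of closed loops removed in the composition `qp`,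
i.e. the blocks of the generated relation consisting only of middle points. -/
noncomputable def rlP {k l m : ℕ} (q : PP l m) (p : PP k l) : ℕ :=
  Nat.card {c : Quotient (bigS p q) //
    ∀ x, Quotient.mk (bigS p q) x = c → ∃ b : Fin l, x = Sum.inr (Sum.inl b)}

/-- `b(p)` : number of blocks. -/
noncomputable def bP {k l : ℕ} (p : PP k l) : ℕ := Nat.card (Quotient p)

/-- `t(p)` : number of through-blocks (blocks meeting both rows). -/
noncomputable def tP {k l : ℕ} (p : PP k l) : ℕ :=
  Nat.card {c : Quotient p // (∃ a : Fin k, Quotient.mk p (Sum.inl a) = c) ∧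
    (∃ b : Fin l, Quotient.mk p (Sum.inr b) = c)}

/-- `β(p) = b(p) - t(p)` : number of non-through-blocks. -/
noncomputable def betaP {k l : ℕ} (p : PP k l) : ℕ := bP p - tP p

/-- The identity partition `|^{⊗k}`. -/
def idP (k : ℕ) : PP k k := Setoid.ker (Sum.elim (fun i : Fin k => i) (fun i : Fin k => i))

/-- A pair partition: all blocks have size two. -/
def isPair {k l : ℕ} (p : PP k l) : Prop := ∀ x, Nat.card {y // p.r x y} = 2

/-- A through-partition: a pair partition each of whose blocks connects exactly one
upper point to exactly one lower point. -/
def isThrough {k : ℕ} (p : PP k k) : Prop :=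
  isPair p ∧ (∀ a b : Fin k, p.r (Sum.inl a) (Sum.inl b) → a = b) ∧
    (∀ a b : Fin k, p.r (Sum.inr a) (Sum.inr b) → a = b)

/-- A building partition. -/
def isBuilding {k l : ℕ} (p : PP k l) : Prop :=
  (∀ b b' : Fin l, p.r (Sum.inr b) (Sum.inr b') → b = b') ∧
  (∀ b : Fin l, ∃ a : Fin k, p.r (Sum.inl a) (Sum.inr b)) ∧
  (∀ b b' : Fin l, ∀ a a' : Fin k, b < b' →
    IsLeast {x : Fin k | p.r (Sum.inl x) (Sum.inr b)} a →
    IsLeast {x : Fin k | p.r (Sum.inl x) (Sum.inr b')} a' → a < a')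

/-- A projective partition: symmetric and idempotent. -/
def isProjective {k : ℕ} (p : PP k k) : Prop := swapP p = p ∧ compP p p = p

/-- Linear position of the points, reading the upper row left to right and then the
lower row right to left. -/
def posP (k l : ℕ) : Fin k ⊕ Fin l → ℕ :=
  Sum.elim (fun i => (i : ℕ)) (fun j => k + (l - 1 - (j : ℕ)))

/-- Noncrossing partitions. -/
def isNC {k l : ℕ} (p : PP k l) : Prop :=
  ¬ ∃ x1 x2 x3 x4 : Fin k ⊕ Fin l,
    posP k l x1 < posP k l x2 ∧ posP k l x2 < posP k l x3 ∧ posP k l x3 < posP k l x4 ∧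
    p.r x1 x3 ∧ p.r x2 x4 ∧ ¬ p.r x1 x2


def liftR {α β : Type*} (f : α → β) (R : α → α → Prop) : β → β → Prop :=
  fun x y => ∃ a b, R a b ∧ x = f a ∧ y = f b

theorem eqvGen_le {α : Type*} {R R' : α → α → Prop}
    (h : ∀ x y, R x y → Relation.EqvGen R' x y) :
    ∀ x y, Relation.EqvGen R x y → Relation.EqvGen R' x y := by
  intro x y hxy
  induction hxy with
  | rel x y h' => exact h x y h'
  | refl x => exact .refl x
  | symm x y _ ih => exact .symm x y ih
  | trans x y z _ _ ih1 ih2 => exact .trans x y z ih1 ih2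

theorem eqvGen_congr {α : Type*} {R R' : α → α → Prop}
    (h1 : ∀ x y, R x y → Relation.EqvGen R' x y)
    (h2 : ∀ x y, R' x y → Relation.EqvGen R x y) :
    Relation.EqvGen.setoid R = Relation.EqvGen.setoid R' :=
  Setoid.ext fun x y => ⟨eqvGen_le h1 x y, eqvGen_le h2 x y⟩

theorem eqvGen_map {α β : Type*} {R : α → α → Prop} {R' : β → β → Prop} (e : α → β)
    (h : ∀ x y, R x y → R' (e x) (e y)) :
    ∀ x y, Relation.EqvGen R x y → Relation.EqvGen R' (e x) (e y) := by
  intro x y hxy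
  induction hxy with
  | rel x y h' => exact .rel _ _ (h x y h')
  | refl x => exact .refl _
  | symm x y _ ih => exact .symm _ _ ih
  | trans x y z _ _ ih1 ih2 => exact .trans _ _ _ ih1 ih2

theorem comap_comap {α β γ : Type*} (f : α → β) (g : β → γ) (s : Setoid γ) :
    Setoid.comap f (Setoid.comap g s) = Setoid.comap (g ∘ f) s :=
  Setoid.ext fun _ _ => Iff.rfl

theorem lemmaM {α Ω : Type*} (π : α → Ω) (A : Setoid Ω) (B : α → α → Prop) :
    Setoid.comap π (Relation.EqvGen.setoid fun x y => A.r x y ∨ liftR π B x y)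
      = Relation.EqvGen.setoid fun u v => A.r (π u) (π v) ∨ B u v := by
  apply Setoid.ext
  intro u v
  constructor
  · intro h
    have key : ∀ x y, Relation.EqvGen (fun x y => A.r x y ∨ liftR π B x y) x y →
        (((∃ u, A.r (π u) x) ↔ (∃ v, A.r (π v) y)) ∧
         ∀ u v, A.r (π u) x → A.r (π v) y →
           Relation.EqvGen (fun u v => A.r (π u) (π v) ∨ B u v) u v) := by
      intro x y hxy
      induction hxy with
      | rel x y h' =>
        rcases h' with hA | ⟨a, b, hB, rfl, rfl⟩
        · exact ⟨⟨fun ⟨u, hu⟩ => ⟨u, A.trans hu hA⟩, fun ⟨v, hv⟩ => ⟨v, A.trans hv (A.symm hA)⟩⟩,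
            fun u v hu hv => .rel _ _ (Or.inl (A.trans hu (A.trans hA (A.symm hv))))⟩
        · refine ⟨⟨fun _ => ⟨b, A.refl _⟩, fun _ => ⟨a, A.refl _⟩⟩, fun u v hu hv => ?_⟩
          exact .trans _ _ _ (.rel _ _ (Or.inl hu))
            (.trans _ _ _ (.rel _ _ (Or.inr hB)) (.symm _ _ (.rel _ _ (Or.inl hv))))
      | refl x =>
        exact ⟨Iff.rfl, fun u v hu hv => .rel _ _ (Or.inl (A.trans hu (A.symm hv)))⟩
      | symm x y _ ih =>
        exact ⟨ih.1.symm, fun u v hu hv => .symm _ _ (ih.2 v u hv hu)⟩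
      | trans x y z _ _ ih1 ih2 =>
        refine ⟨ih1.1.trans ih2.1, fun u w hu hw => ?_⟩
        obtain ⟨v, hv⟩ := ih1.1.mp ⟨u, hu⟩
        exact .trans _ _ _ (ih1.2 u v hu hv) (ih2.2 v w hv hw)
    exact (key _ _ h).2 u v (A.refl _) (A.refl _)
  · intro h
    show Relation.EqvGen _ (π u) (π v)
    induction h with
    | rel x y h' =>
      rcases h' with hA | hB
      · exact .rel _ _ (Or.inl hA)
      · exact .rel _ _ (Or.inr ⟨x, y, hB, rfl, rfl⟩)
    | refl x => exact .refl _
    | symm x y _ ih => exact .symm _ _ ih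
    | trans x y z _ _ ih1 ih2 => exact .trans _ _ _ ih1 ih2
theorem expand {k l m : ℕ} (p : PP k l) (q : PP l m) {α Ω δ : Type*}
    (ee : Fin k ⊕ Fin m → α) (C : α → α → Prop) (j : α → Ω)
    (eS : Fin k ⊕ (Fin l ⊕ Fin m) → Ω) (Φ : Ω ≃ ((Fin k ⊕ (Fin l ⊕ Fin m)) ⊕ δ))
    (hj : Function.Injective j)
    (hΦS : ∀ w, Φ (eS w) = Sum.inl w)
    (hcomm : ∀ w, j (ee w) = eS (Sum.map id Sum.inr w))
    (hcover : ∀ x : α, (∃ w, x = ee w) ∨ (∃ d, Φ (j x) = Sum.inr d)) :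
    Relation.EqvGen.setoid (fun x y => liftR ee (compP q p).r x y ∨ C x y)
      = Setoid.comap j (Relation.EqvGen.setoid
          (fun X Y => liftR eS (midRel p q) X Y ∨ liftR j C X Y)) := by
  set S : Setoid (Fin k ⊕ (Fin l ⊕ Fin m)) := bigS p q with hS
  set K : Setoid δ := Setoid.ker (id : δ → δ) with hK
  set A : Setoid Ω := Setoid.comap Φ (sumSetoid S K) with hA
  have step2 := lemmaM j A C
  have step3 : Relation.EqvGen.setoid (fun u v => A.r (j u) (j v) ∨ C u v)
      = Relation.EqvGen.setoid (fun x y => liftR ee (compP q p).r x y ∨ C x y) := by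
    apply eqvGen_congr
    · intro u v h
      rcases h with h | hC
      · rcases hcover u with ⟨w, rfl⟩ | ⟨d, hd⟩ <;> rcases hcover v with ⟨w', rfl⟩ | ⟨d', hd'⟩
        · have h' : (sumSetoid S K).r (Φ (j (ee w))) (Φ (j (ee w'))) := h
          rw [hcomm, hΦS, hcomm, hΦS] at h'
          cases h' with
          | inl hS' => exact .rel _ _ (Or.inl ⟨w, w', hS', rfl, rfl⟩)
        · have h' : (sumSetoid S K).r (Φ (j (ee w))) (Φ (j v)) := h
          rw [hcomm, hΦS, hd'] at h'
          cases h'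
        · have h' : (sumSetoid S K).r (Φ (j u)) (Φ (j (ee w'))) := h
          rw [hcomm, hΦS, hd] at h'
          cases h'
        · have h' : (sumSetoid S K).r (Φ (j u)) (Φ (j v)) := h
          rw [hd, hd'] at h'
          cases h' with
          | inr hK' =>
            have : d = d' := hK'
            subst this
            have : j u = j v := Φ.injective (hd.trans hd'.symm)
            have : u = v := hj this
            subst this
            exact .refl _
      · exact .rel _ _ (Or.inr hC)
    · intro x y h
      rcases h with ⟨w, w', hc, rfl, rfl⟩ | hC
      · refine .rel _ _ (Or.inl ?_)
        show (sumSetoid S K).r (Φ (j (ee w))) (Φ (j (ee w')))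
        rw [hcomm, hΦS, hcomm, hΦS]
        exact Sum.LiftRel.inl hc
      · exact .rel _ _ (Or.inr hC)
  have step4 : Relation.EqvGen.setoid (fun x y => A.r x y ∨ liftR j C x y)
      = Relation.EqvGen.setoid
          (fun X Y => liftR eS (midRel p q) X Y ∨ liftR j C X Y) := by
    apply eqvGen_congr
    · intro X Y h
      rcases h with h | hC
      · have h' : Sum.LiftRel S.r K.r (Φ X) (Φ Y) := h
        rcases hX : Φ X with W | d <;> rcases hY : Φ Y with W' | d' <;>
          rw [hX, hY] at h'
        · cases h' with
          | inl hSr =>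
            have hXe : X = eS W := Φ.injective (hX.trans (hΦS W).symm)
            have hYe : Y = eS W' := Φ.injective (hY.trans (hΦS W').symm)
            subst hXe hYe
            exact eqvGen_map eS (fun a b hab => Or.inl ⟨a, b, hab, rfl, rfl⟩) _ _ hSr
        · cases h'
        · cases h'
        · cases h' with
          | inr hKr =>
            have : d = d' := hKr
            subst this
            have : X = Y := Φ.injective (hX.trans hY.symm)
            subst this
            exact .refl _
      · exact .rel _ _ (Or.inr hC)
    · intro X Y h
      rcases h with ⟨W, W', hm, rfl, rfl⟩ | hC
      · refine .rel _ _ (Or.inl ?_)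
        show Sum.LiftRel S.r K.r (Φ (eS W)) (Φ (eS W'))
        rw [hΦS, hΦS]
        exact Sum.LiftRel.inl (Relation.EqvGen.rel _ _ hm)
      · exact .rel _ _ (Or.inr hC)
  calc Relation.EqvGen.setoid (fun x y => liftR ee (compP q p).r x y ∨ C x y)
      = Relation.EqvGen.setoid (fun u v => A.r (j u) (j v) ∨ C u v) := step3.symm
    _ = Setoid.comap j (Relation.EqvGen.setoid fun x y => A.r x y ∨ liftR j C x y) := step2.symm
    _ = Setoid.comap j (Relation.EqvGen.setoid
          (fun X Y => liftR eS (midRel p q) X Y ∨ liftR j C X Y)) := by rw [step4]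

theorem eqvGen_or_comm {α : Type*} (P Q : α → α → Prop) :
    Relation.EqvGen.setoid (fun x y => P x y ∨ Q x y)
      = Relation.EqvGen.setoid (fun x y => Q x y ∨ P x y) :=
  eqvGen_congr (fun _ _ h => .rel _ _ h.symm) (fun _ _ h => .rel _ _ h.symm)

theorem compP_assoc {k l m n : ℕ} (a : PP k l) (b : PP l m) (c : PP m n) :
    compP c (compP b a) = compP (compP c b) a := by
  classical
  -- notation for the four-row type and embeddings
  let Ω4 := Fin k ⊕ (Fin l ⊕ (Fin m ⊕ Fin n))
  let ea : Fin k ⊕ Fin l → Ω4 := Sum.elim Sum.inl (fun x => Sum.inr (Sum.inl x))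
  let eb : Fin l ⊕ Fin m → Ω4 :=
    Sum.elim (fun x => Sum.inr (Sum.inl x)) (fun x => Sum.inr (Sum.inr (Sum.inl x)))
  let ec : Fin m ⊕ Fin n → Ω4 :=
    Sum.elim (fun x => Sum.inr (Sum.inr (Sum.inl x))) (fun x => Sum.inr (Sum.inr (Sum.inr x)))
  let g : Fin k ⊕ Fin n → Ω4 := Sum.elim Sum.inl (fun x => Sum.inr (Sum.inr (Sum.inr x)))
  let R3 : Ω4 → Ω4 → Prop := fun X Y =>
    liftR ea a.r X Y ∨ liftR eb b.r X Y ∨ liftR ec c.r X Y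
  -- ===================== CLAIM A =====================
  have claimA : compP c (compP b a) = Setoid.comap g (Relation.EqvGen.setoid R3) := by
    let j : (Fin k ⊕ (Fin m ⊕ Fin n)) → Ω4 := Sum.map id Sum.inr
    let e : (Fin k ⊕ (Fin l ⊕ Fin m)) → Ω4 :=
      Sum.elim Sum.inl (Sum.elim (fun x => Sum.inr (Sum.inl x))
        (fun x => Sum.inr (Sum.inr (Sum.inl x))))
    let C : (Fin k ⊕ (Fin m ⊕ Fin n)) → (Fin k ⊕ (Fin m ⊕ Fin n)) → Prop :=
      liftR Sum.inr c.r
    let Φ : Ω4 ≃ ((Fin k ⊕ (Fin l ⊕ Fin m)) ⊕ Fin n) :=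
      { toFun := fun X => match X with
          | .inl x => .inl (.inl x)
          | .inr (.inl x) => .inl (.inr (.inl x))
          | .inr (.inr (.inl x)) => .inl (.inr (.inr x))
          | .inr (.inr (.inr x)) => .inr x
        invFun := fun Z => match Z with
          | .inl (.inl x) => .inl x
          | .inl (.inr (.inl x)) => .inr (.inl x)
          | .inl (.inr (.inr x)) => .inr (.inr (.inl x))
          | .inr x => .inr (.inr (.inr x))
        left_inv := by rintro (x | x | x | x) <;> rfl
        right_inv := by rintro ((x | x | x) | x) <;> rfl }
    have hj : Function.Injective j :=
      Function.Injective.sumMap (fun _ _ h => h) Sum.inr_injective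
    have hΦS : ∀ w, Φ (e w) = Sum.inl w := by rintro (x | x | x) <;> rfl
    have hcomm : ∀ w, j (Sum.map id Sum.inl w) = e (Sum.map id Sum.inr w) := by
      rintro (x | x) <;> rfl
    have hcover : ∀ x : Fin k ⊕ (Fin m ⊕ Fin n),
        (∃ w, x = Sum.map id Sum.inl w) ∨ (∃ d, Φ (j x) = Sum.inr d) := by
      rintro (x | x | x)
      · exact Or.inl ⟨Sum.inl x, rfl⟩
      · exact Or.inl ⟨Sum.inr x, rfl⟩
      · exact Or.inr ⟨x, rfl⟩
    have hexp := expand a b (Sum.map id Sum.inl) C j e Φ hj hΦS hcomm hcover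
    have h0 : compP c (compP b a)
        = Setoid.comap (Sum.map id Sum.inr : Fin k ⊕ Fin n → Fin k ⊕ (Fin m ⊕ Fin n))
            (Relation.EqvGen.setoid
              (fun x y => liftR (Sum.map id Sum.inl) (compP b a).r x y ∨ C x y)) := rfl
    rw [h0, hexp, comap_comap]
    have hg : j ∘ (Sum.map id Sum.inr : Fin k ⊕ Fin n → Fin k ⊕ (Fin m ⊕ Fin n)) = g := by
      funext x; rcases x with x | x <;> rfl
    rw [hg]
    congr 1
    apply eqvGen_congr
    · intro X Y h
      rcases h with ⟨W, W', hm, rfl, rfl⟩ | ⟨x, y, hC, rfl, rfl⟩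
      · rcases hm with ⟨u, v, ha, rfl, rfl⟩ | ⟨u, v, hb, rfl, rfl⟩
        · refine .rel _ _ (Or.inl ⟨u, v, ha, ?_, ?_⟩) <;>
            first
              | (rcases u with u | u <;> rfl)
              | (rcases v with v | v <;> rfl)
        · refine .rel _ _ (Or.inr (Or.inl ⟨u, v, hb, ?_, ?_⟩)) <;>
            first
              | (rcases u with u | u <;> rfl)
              | (rcases v with v | v <;> rfl)
      · rcases hC with ⟨u, v, hc, rfl, rfl⟩
        refine .rel _ _ (Or.inr (Or.inr ⟨u, v, hc, ?_, ?_⟩)) <;>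
          first
            | (rcases u with u | u <;> rfl)
            | (rcases v with v | v <;> rfl)
    · intro X Y h
      rcases h with ⟨u, v, ha, rfl, rfl⟩ | ⟨u, v, hb, rfl, rfl⟩ | ⟨u, v, hc, rfl, rfl⟩
      · refine .rel _ _ (Or.inl ⟨Sum.map id Sum.inl u, Sum.map id Sum.inl v,
          Or.inl ⟨u, v, ha, rfl, rfl⟩, ?_, ?_⟩) <;>
          first
            | (rcases u with u | u <;> rfl)
            | (rcases v with v | v <;> rfl)
      · refine .rel _ _ (Or.inl ⟨Sum.inr u, Sum.inr v,
          Or.inr ⟨u, v, hb, rfl, rfl⟩, ?_, ?_⟩) <;>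
          first
            | (rcases u with u | u <;> rfl)
            | (rcases v with v | v <;> rfl)
      · refine .rel _ _ (Or.inr ⟨Sum.inr u, Sum.inr v, ⟨u, v, hc, rfl, rfl⟩, ?_, ?_⟩) <;>
          first
            | (rcases u with u | u <;> rfl)
            | (rcases v with v | v <;> rfl)
  -- ===================== CLAIM B =====================
  have claimB : compP (compP c b) a = Setoid.comap g (Relation.EqvGen.setoid R3) := by
    let j : (Fin k ⊕ (Fin l ⊕ Fin n)) → Ω4 := Sum.map id (Sum.map id Sum.inr)
    let e : (Fin l ⊕ (Fin m ⊕ Fin n)) → Ω4 := Sum.inr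
    let C : (Fin k ⊕ (Fin l ⊕ Fin n)) → (Fin k ⊕ (Fin l ⊕ Fin n)) → Prop :=
      liftR (Sum.map id Sum.inl) a.r
    let Φ : Ω4 ≃ ((Fin l ⊕ (Fin m ⊕ Fin n)) ⊕ Fin k) := Equiv.sumComm _ _
    have hj : Function.Injective j :=
      Function.Injective.sumMap (fun _ _ h => h)
        (Function.Injective.sumMap (fun _ _ h => h) Sum.inr_injective)
    have hΦS : ∀ w, Φ (e w) = Sum.inl w := fun w => rfl
    have hcomm : ∀ w, j (Sum.inr w) = e (Sum.map id Sum.inr w) := by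
      rintro (x | x) <;> rfl
    have hcover : ∀ x : Fin k ⊕ (Fin l ⊕ Fin n),
        (∃ w, x = Sum.inr w) ∨ (∃ d, Φ (j x) = Sum.inr d) := by
      rintro (x | x)
      · exact Or.inr ⟨x, rfl⟩
      · exact Or.inl ⟨x, rfl⟩
    have hexp := expand b c Sum.inr C j e Φ hj hΦS hcomm hcover
    have h0 : compP (compP c b) a
        = Setoid.comap (Sum.map id Sum.inr : Fin k ⊕ Fin n → Fin k ⊕ (Fin l ⊕ Fin n))
            (Relation.EqvGen.setoid
              (fun x y => C x y ∨ liftR Sum.inr (compP c b).r x y)) := rfl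
    rw [h0, eqvGen_or_comm, hexp, comap_comap]
    have hg : j ∘ (Sum.map id Sum.inr : Fin k ⊕ Fin n → Fin k ⊕ (Fin l ⊕ Fin n)) = g := by
      funext x; rcases x with x | x <;> rfl
    rw [hg]
    congr 1
    apply eqvGen_congr
    · intro X Y h
      rcases h with ⟨W, W', hm, rfl, rfl⟩ | ⟨x, y, hC, rfl, rfl⟩
      · rcases hm with ⟨u, v, hb, rfl, rfl⟩ | ⟨u, v, hc, rfl, rfl⟩
        · refine .rel _ _ (Or.inr (Or.inl ⟨u, v, hb, ?_, ?_⟩)) <;>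
            first
              | (rcases u with u | u <;> rfl)
              | (rcases v with v | v <;> rfl)
        · refine .rel _ _ (Or.inr (Or.inr ⟨u, v, hc, ?_, ?_⟩)) <;>
            first
              | (rcases u with u | u <;> rfl)
              | (rcases v with v | v <;> rfl)
      · rcases hC with ⟨u, v, ha, rfl, rfl⟩
        refine .rel _ _ (Or.inl ⟨u, v, ha, ?_, ?_⟩) <;>
          first
            | (rcases u with u | u <;> rfl)
            | (rcases v with v | v <;> rfl)
    · intro X Y h
      rcases h with ⟨u, v, ha, rfl, rfl⟩ | ⟨u, v, hb, rfl, rfl⟩ | ⟨u, v, hc, rfl, rfl⟩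
      · refine .rel _ _ (Or.inr ⟨Sum.map id Sum.inl u, Sum.map id Sum.inl v,
          ⟨u, v, ha, rfl, rfl⟩, ?_, ?_⟩) <;>
          first
            | (rcases u with u | u <;> rfl)
            | (rcases v with v | v <;> rfl)
      · refine .rel _ _ (Or.inl ⟨Sum.map id Sum.inl u, Sum.map id Sum.inl v,
          Or.inl ⟨u, v, hb, rfl, rfl⟩, ?_, ?_⟩) <;>
          first
            | (rcases u with u | u <;> rfl)
            | (rcases v with v | v <;> rfl)
      · refine .rel _ _ (Or.inl ⟨Sum.inr u, Sum.inr v,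
          Or.inr ⟨u, v, hc, rfl, rfl⟩, ?_, ?_⟩) <;>
          first
            | (rcases u with u | u <;> rfl)
            | (rcases v with v | v <;> rfl)
  exact claimA.trans claimB.symm

theorem midRel_symm {k l m : ℕ} (p : PP k l) (q : PP l m) {x y}
    (h : midRel p q x y) : midRel p q y x := by
  rcases h with ⟨a, b, hab, rfl, rfl⟩ | ⟨a, b, hab, rfl, rfl⟩
  · exact Or.inl ⟨b, a, p.symm hab, rfl, rfl⟩
  · exact Or.inr ⟨b, a, q.symm hab, rfl, rfl⟩

/-- If a composition connects an upper point to a lower point, the first factor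
connects that upper point to a middle point. -/
theorem through_witness {k l m : ℕ} (a : PP k l) (b : PP l m) (x : Fin k) (y : Fin m)
    (h : (compP b a).r (Sum.inl x) (Sum.inr y)) :
    ∃ mm : Fin l, a.r (Sum.inl x) (Sum.inr mm) := by
  have h' : Relation.EqvGen (midRel a b) (Sum.inl x) (Sum.inr (Sum.inr y)) := h
  set P : (Fin k ⊕ (Fin l ⊕ Fin m)) → Prop := fun z =>
    (∃ cpt, a.r (Sum.inl x) cpt ∧ z = Sum.map id Sum.inl cpt) ∨
    (∃ mm : Fin l, a.r (Sum.inl x) (Sum.inr mm)) with hP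
  have step : ∀ z w, midRel a b z w → P z → P w := by
    rintro z w (⟨a', b', hab, rfl, rfl⟩ | ⟨c', d', hcd, rfl, rfl⟩) hz
    · rcases hz with ⟨cpt, hc, heq⟩ | hm
      · have : a' = cpt := by
          rcases a' with a' | a' <;> rcases cpt with cpt | cpt <;>
            simp [Sum.map] at heq <;> simp [heq]
        subst this
        exact Or.inl ⟨b', a.trans hc hab, rfl⟩
      · exact Or.inr hm
    · rcases hz with ⟨cpt, hc, heq⟩ | hm
      · rcases cpt with cpt | cpt
        · simp [Sum.map] at heq
        · have : c' = Sum.inl cpt := by simpa [Sum.map] using heq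
          subst this
          exact Or.inr ⟨cpt, hc⟩
      · exact Or.inr hm
  have inv : ∀ z w, Relation.EqvGen (midRel a b) z w → (P z ↔ P w) := by
    intro z w hzw
    induction hzw with
    | rel z w h'' => exact ⟨step z w h'', step w z (midRel_symm a b h'')⟩
    | refl z => exact Iff.rfl
    | symm z w _ ih => exact ih.symm
    | trans z w v _ _ ih1 ih2 => exact ih1.trans ih2
  have hPx : P (Sum.inl x) := Or.inl ⟨Sum.inl x, a.refl _, rfl⟩
  have hPy : P (Sum.inr (Sum.inr y)) := (inv _ _ h').mp hPx
  rcases hPy with ⟨cpt, hc, heq⟩ | hm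
  · rcases cpt with cpt | cpt <;> simp [Sum.map] at heq
  · exact hm

/-- If a composition connects an upper point to a lower point, the second factor
connects a middle point to that lower point. -/
theorem through_witness' {k l m : ℕ} (a : PP k l) (b : PP l m) (x : Fin k) (y : Fin m)
    (h : (compP b a).r (Sum.inl x) (Sum.inr y)) :
    ∃ mm : Fin l, b.r (Sum.inl mm) (Sum.inr y) := by
  have h' : Relation.EqvGen (midRel a b) (Sum.inl x) (Sum.inr (Sum.inr y)) := h
  set P : (Fin k ⊕ (Fin l ⊕ Fin m)) → Prop := fun z =>
    (∃ cpt, b.r (Sum.inr y) cpt ∧ z = Sum.inr cpt) ∨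
    (∃ mm : Fin l, b.r (Sum.inr y) (Sum.inl mm)) with hP
  have step : ∀ z w, midRel a b z w → P z → P w := by
    rintro z w (⟨a', b', hab, rfl, rfl⟩ | ⟨c', d', hcd, rfl, rfl⟩) hz
    · rcases hz with ⟨cpt, hc, heq⟩ | hm
      · rcases a' with a' | a'
        · simp [Sum.map] at heq
        · have : cpt = Sum.inl a' := by simpa [Sum.map, eq_comm] using heq
          subst this
          exact Or.inr ⟨a', hc⟩
      · exact Or.inr hm
    · rcases hz with ⟨cpt, hc, heq⟩ | hm
      · have : c' = cpt := by simpa using heq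
        subst this
        exact Or.inl ⟨d', b.trans hc hcd, rfl⟩
      · exact Or.inr hm
  have inv : ∀ z w, Relation.EqvGen (midRel a b) z w → (P z ↔ P w) := by
    intro z w hzw
    induction hzw with
    | rel z w h'' => exact ⟨step z w h'', step w z (midRel_symm a b h'')⟩
    | refl z => exact Iff.rfl
    | symm z w _ ih => exact ih.symm
    | trans z w v _ _ ih1 ih2 => exact ih1.trans ih2
  have hPy : P (Sum.inr (Sum.inr y)) := Or.inl ⟨Sum.inr y, b.refl _, rfl⟩
  have hPx : P (Sum.inl x) := (inv _ _ h').mpr hPy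
  rcases hPx with ⟨cpt, hc, heq⟩ | hm
  · simp at heq
  · obtain ⟨mm, hmm⟩ := hm
    exact ⟨mm, b.symm hmm⟩

theorem comp_r_of_left {k l m : ℕ} (a : PP k l) (b : PP l m) {x y : Fin k}
    (h : a.r (Sum.inl x) (Sum.inl y)) :
    (compP b a).r (Sum.inl x) (Sum.inl y) :=
  Relation.EqvGen.rel _ _ (Or.inl ⟨Sum.inl x, Sum.inl y, h, rfl, rfl⟩)

theorem comp_r_of_right {k l m : ℕ} (a : PP k l) (b : PP l m) {x y : Fin m}
    (h : b.r (Sum.inr x) (Sum.inr y)) :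
    (compP b a).r (Sum.inr x) (Sum.inr y) :=
  Relation.EqvGen.rel _ _ (Or.inr ⟨Sum.inr x, Sum.inr y, h, rfl, rfl⟩)

theorem tP_comp_le_left {k l m : ℕ} (a : PP k l) (b : PP l m) :
    tP (compP b a) ≤ tP a := by
  classical
  set cp := compP b a
  let f : {c : Quotient cp // (∃ x : Fin k, Quotient.mk cp (Sum.inl x) = c) ∧
        (∃ y : Fin m, Quotient.mk cp (Sum.inr y) = c)} →
      {c : Quotient a // (∃ x : Fin k, Quotient.mk a (Sum.inl x) = c) ∧
        (∃ y : Fin l, Quotient.mk a (Sum.inr y) = c)} := fun c => by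
    refine ⟨Quotient.mk a (Sum.inl c.2.1.choose), ⟨c.2.1.choose, rfl⟩, ?_⟩
    have hrel : cp.r (Sum.inl c.2.1.choose) (Sum.inr c.2.2.choose) :=
      Quotient.exact (c.2.1.choose_spec.trans c.2.2.choose_spec.symm)
    obtain ⟨mm, hmm⟩ := through_witness a b _ _ hrel
    exact ⟨mm, Quotient.sound (a.symm hmm)⟩
  have hf : Function.Injective f := by
    intro c1 c2 h
    have h' : Quotient.mk a (Sum.inl c1.2.1.choose) = Quotient.mk a (Sum.inl c2.2.1.choose) :=
      congrArg Subtype.val h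
    have hrel : a.r (Sum.inl c1.2.1.choose) (Sum.inl c2.2.1.choose) := Quotient.exact h'
    have : Quotient.mk cp (Sum.inl c1.2.1.choose) = Quotient.mk cp (Sum.inl c2.2.1.choose) :=
      Quotient.sound (comp_r_of_left a b hrel)
    exact Subtype.ext (c1.2.1.choose_spec.symm.trans (this.trans c2.2.1.choose_spec))
  exact Nat.card_le_card_of_injective f hf

theorem tP_comp_le_right {k l m : ℕ} (a : PP k l) (b : PP l m) :
    tP (compP b a) ≤ tP b := by
  classical
  set cp := compP b a
  let f : {c : Quotient cp // (∃ x : Fin k, Quotient.mk cp (Sum.inl x) = c) ∧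
        (∃ y : Fin m, Quotient.mk cp (Sum.inr y) = c)} →
      {c : Quotient b // (∃ x : Fin l, Quotient.mk b (Sum.inl x) = c) ∧
        (∃ y : Fin m, Quotient.mk b (Sum.inr y) = c)} := fun c => by
    refine ⟨Quotient.mk b (Sum.inr c.2.2.choose), ?_, ⟨c.2.2.choose, rfl⟩⟩
    have hrel : cp.r (Sum.inl c.2.1.choose) (Sum.inr c.2.2.choose) :=
      Quotient.exact (c.2.1.choose_spec.trans c.2.2.choose_spec.symm)
    obtain ⟨mm, hmm⟩ := through_witness' a b _ _ hrel
    exact ⟨mm, Quotient.sound hmm⟩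
  have hf : Function.Injective f := by
    intro c1 c2 h
    have h' : Quotient.mk b (Sum.inr c1.2.2.choose) = Quotient.mk b (Sum.inr c2.2.2.choose) :=
      congrArg Subtype.val h
    have hrel : b.r (Sum.inr c1.2.2.choose) (Sum.inr c2.2.2.choose) := Quotient.exact h'
    have : Quotient.mk cp (Sum.inr c1.2.2.choose) = Quotient.mk cp (Sum.inr c2.2.2.choose) :=
      Quotient.sound (comp_r_of_right a b hrel)
    exact Subtype.ext (c1.2.2.choose_spec.symm.trans (this.trans c2.2.2.choose_spec))
  exact Nat.card_le_card_of_injective f hf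

theorem tP_le_upper {k l : ℕ} (p : PP k l) : tP p ≤ k := by
  classical
  let f : {c : Quotient p // (∃ x : Fin k, Quotient.mk p (Sum.inl x) = c) ∧
        (∃ y : Fin l, Quotient.mk p (Sum.inr y) = c)} → Fin k := fun c => c.2.1.choose
  have hf : Function.Injective f := by
    intro c1 c2 h
    exact Subtype.ext (c1.2.1.choose_spec.symm.trans
      (by rw [show c1.2.1.choose = c2.2.1.choose from h]; exact c2.2.1.choose_spec))
  have h2 : Nat.card (Fin k) = k := by simp
  exact le_trans (Nat.card_le_card_of_injective f hf) (le_of_eq h2)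

theorem isThrough_of_tP_eq {t : ℕ} (r : PP t t) (h : tP r = t) : isThrough r := by
  classical
  set TC := {c : Quotient r // (∃ x : Fin t, Quotient.mk r (Sum.inl x) = c) ∧
      (∃ y : Fin t, Quotient.mk r (Sum.inr y) = c)} with hTC
  have hcard : Nat.card TC = Nat.card (Fin t) := by
    have h2 : Nat.card (Fin t) = t := by simp
    rw [h2]
    exact h
  -- upper witness map is injective hence bijective
  let w : TC → Fin t := fun c => c.2.1.choose
  have hw_inj : Function.Injective w := by
    intro c1 c2 hww
    refine Subtype.ext (c1.2.1.choose_spec.symm.trans ?_)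
    rw [show c1.2.1.choose = c2.2.1.choose from hww]
    exact c2.2.1.choose_spec
  have hw_surj : Function.Surjective w :=
    ((Nat.bijective_iff_injective_and_card w).mpr ⟨hw_inj, hcard⟩).surjective
  have upper_through : ∀ x : Fin t, ∃ b : Fin t, r.r (Sum.inl x) (Sum.inr b) := by
    intro x
    obtain ⟨c, hc⟩ := hw_surj x
    obtain ⟨b, hb⟩ := c.2.2
    refine ⟨b, Quotient.exact ?_⟩
    rw [← hc]
    exact c.2.1.choose_spec.trans hb.symm
  -- lower witness map
  let w' : TC → Fin t := fun c => c.2.2.choose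
  have hw'_inj : Function.Injective w' := by
    intro c1 c2 hww
    refine Subtype.ext (c1.2.2.choose_spec.symm.trans ?_)
    rw [show c1.2.2.choose = c2.2.2.choose from hww]
    exact c2.2.2.choose_spec
  have hw'_surj : Function.Surjective w' :=
    ((Nat.bijective_iff_injective_and_card w').mpr ⟨hw'_inj, hcard⟩).surjective
  have lower_through : ∀ y : Fin t, ∃ a : Fin t, r.r (Sum.inl a) (Sum.inr y) := by
    intro y
    obtain ⟨c, hc⟩ := hw'_surj y
    obtain ⟨a, ha⟩ := c.2.1
    refine ⟨a, Quotient.exact ?_⟩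
    rw [ha]
    rw [← hc]
    exact (c.2.2.choose_spec).symm
  -- upper injectivity
  let g : Fin t → TC := fun x => ⟨Quotient.mk r (Sum.inl x), ⟨x, rfl⟩,
    ⟨(upper_through x).choose, Quotient.sound (r.symm (upper_through x).choose_spec)⟩⟩
  have hg_surj : Function.Surjective g := by
    intro c
    obtain ⟨x, hx⟩ := c.2.1
    exact ⟨x, Subtype.ext hx⟩
  have hg_inj : Function.Injective g :=
    ((Nat.bijective_iff_surjective_and_card g).mpr ⟨hg_surj, hcard.symm⟩).injective
  have hupper : ∀ a b : Fin t, r.r (Sum.inl a) (Sum.inl b) → a = b := by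
    intro a b hab
    exact hg_inj (Subtype.ext (Quotient.sound hab))
  -- lower injectivity
  let g' : Fin t → TC := fun y => ⟨Quotient.mk r (Sum.inr y),
    ⟨(lower_through y).choose, Quotient.sound (lower_through y).choose_spec⟩, ⟨y, rfl⟩⟩
  have hg'_surj : Function.Surjective g' := by
    intro c
    obtain ⟨y, hy⟩ := c.2.2
    exact ⟨y, Subtype.ext hy⟩
  have hg'_inj : Function.Injective g' :=
    ((Nat.bijective_iff_surjective_and_card g').mpr ⟨hg'_surj, hcard.symm⟩).injective
  have hlower : ∀ a b : Fin t, r.r (Sum.inr a) (Sum.inr b) → a = b := by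
    intro a b hab
    exact hg'_inj (Subtype.ext (Quotient.sound hab))
  refine ⟨?_, hupper, hlower⟩
  intro x
  rw [Nat.card_eq_two_iff]
  rcases x with a | b
  · obtain ⟨b, hb⟩ := upper_through a
    refine ⟨⟨Sum.inl a, r.refl _⟩, ⟨Sum.inr b, hb⟩, by simp, ?_⟩
    apply Set.eq_univ_iff_forall.mpr
    rintro ⟨y, hy⟩
    rcases y with a' | b'
    · have : a = a' := hupper a a' hy
      subst this
      simp
    · have : b = b' := hlower b b' (r.trans (r.symm hb) hy)
      subst this
      simp
  · obtain ⟨a, ha⟩ := lower_through b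
    refine ⟨⟨Sum.inr b, r.refl _⟩, ⟨Sum.inl a, r.symm ha⟩, by simp, ?_⟩
    apply Set.eq_univ_iff_forall.mpr
    rintro ⟨y, hy⟩
    rcases y with a' | b'
    · have : a = a' := hupper a a' (r.trans ha hy)
      subst this
      simp
    · have : b = b' := hlower b b' hy
      subst this
      simp
/-- if `p` is projective with through-block decomposition `p = p_u* p_u`
and `pq = q = qp` with `t(q) = t(p)`, then `q = p_u* r p_u` for a through-partition `r`. -/
theorem middle_through_partition {k : ℕ} (p : PP k k) (hp : isProjective p)
    (pu : PP k (tP p)) (hpu : isBuilding pu) (hdec : p = compP (swapP pu) pu)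
    (q : PP k k) (h1 : compP p q = q) (h2 : compP q p = q) (ht : tP q = tP p) :
    ∃ r : PP (tP p) (tP p), isThrough r ∧ q = compP (swapP pu) (compP r pu) := by
  classical
  set r : PP (tP p) (tP p) := compP pu (compP q (swapP pu)) with hr
  have e1 : compP r pu = compP pu q := by
    calc compP (compP pu (compP q (swapP pu))) pu
        = compP pu (compP (compP q (swapP pu)) pu) :=
          (compP_assoc pu (compP q (swapP pu)) pu).symm
      _ = compP pu (compP q (compP (swapP pu) pu)) := by
          rw [← compP_assoc pu (swapP pu) q]
      _ = compP pu (compP q p) := by rw [← hdec]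
      _ = compP pu q := by rw [h2]
  have heq : q = compP (swapP pu) (compP r pu) := by
    calc q = compP p q := h1.symm
      _ = compP (compP (swapP pu) pu) q := by rw [← hdec]
      _ = compP (swapP pu) (compP pu q) := (compP_assoc q pu (swapP pu)).symm
      _ = compP (swapP pu) (compP r pu) := by rw [e1]
  have htr : tP r = tP p := by
    apply le_antisymm
    · exact tP_le_upper r
    · have h3 : tP q ≤ tP r := by
        rw [heq]
        exact le_trans (tP_comp_le_left (compP r pu) (swapP pu)) (tP_comp_le_right pu r)
      calc tP p = tP q := ht.symm
        _ ≤ tP r := h3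
  exact ⟨r, isThrough_of_tP_eq r htr, heq⟩
end

section
/- For a projective partition p ∈ C(k,k) in a category of partitions C with t(p) > 0 and through-block decomposition p = p_u* p_u, the set Sym(p) = {σ ∈ S_{t(p)} : p_u* r_σ p_u ∈ C} is a subgroup of the symmetric group S_{t(p)}. -/
/-- Rotation of the leftmost upper point to the lower-left position: reindexing equivalence. -/
def rotEquivL (k l : ℕ) : (Fin k ⊕ Fin (l + 1)) ≃ (Fin (k + 1) ⊕ Fin l) :=
  (Equiv.sumCongr (Equiv.refl (Fin k))
      ((finCongr (Nat.add_comm l 1)).trans finSumFinEquiv.symm)).trans <|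
    ((Equiv.sumAssoc (Fin k) (Fin 1) (Fin l)).symm).trans <|
      (Equiv.sumCongr (Equiv.sumComm (Fin k) (Fin 1)) (Equiv.refl (Fin l))).trans <|
        (Equiv.sumCongr finSumFinEquiv (Equiv.refl (Fin l))).trans
          (Equiv.sumCongr (finCongr (Nat.add_comm 1 k)) (Equiv.refl (Fin l)))

/-- Rotation of the rightmost upper point to the lower-right position: reindexing equivalence. -/
def rotEquivR (k l : ℕ) : (Fin k ⊕ Fin (l + 1)) ≃ (Fin (k + 1) ⊕ Fin l) :=
  (Equiv.sumCongr (Equiv.refl (Fin k)) finSumFinEquiv.symm).trans <|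
    (Equiv.sumCongr (Equiv.refl (Fin k)) (Equiv.sumComm (Fin l) (Fin 1))).trans <|
      ((Equiv.sumAssoc (Fin k) (Fin 1) (Fin l)).symm).trans
        (Equiv.sumCongr finSumFinEquiv (Equiv.refl (Fin l)))

/-- A category of partitions: contains the identity partition and is closed under
tensor products, composition, involution and rotations. -/
structure PartitionCategory where
  mem : ∀ k l : ℕ, Set (PP k l)
  id_mem : idP 1 ∈ mem 1 1
  tensor_mem : ∀ {k l k' l' : ℕ} (p : PP k l) (q : PP k' l'),
    p ∈ mem k l → q ∈ mem k' l' → tensorP p q ∈ mem (k + k') (l + l')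
  comp_mem : ∀ {k l m : ℕ} (q : PP l m) (p : PP k l),
    q ∈ mem l m → p ∈ mem k l → compP q p ∈ mem k m
  swap_mem : ∀ {k l : ℕ} (p : PP k l), p ∈ mem k l → swapP p ∈ mem l k
  rotL_mem : ∀ {k l : ℕ} (p : PP (k + 1) l),
    p ∈ mem (k + 1) l → Setoid.comap (rotEquivL k l) p ∈ mem k (l + 1)
  rotL_mem' : ∀ {k l : ℕ} (p : PP k (l + 1)),
    p ∈ mem k (l + 1) → Setoid.comap (rotEquivL k l).symm p ∈ mem (k + 1) l
  rotR_mem : ∀ {k l : ℕ} (p : PP (k + 1) l),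
    p ∈ mem (k + 1) l → Setoid.comap (rotEquivR k l) p ∈ mem k (l + 1)
  rotR_mem' : ∀ {k l : ℕ} (p : PP k (l + 1)),
    p ∈ mem k (l + 1) → Setoid.comap (rotEquivR k l).symm p ∈ mem (k + 1) l

/-- The pair partition `r_σ` associated to a permutation `σ`, connecting the `i`-th
upper point to the `σ(i)`-th lower point. -/
def permP {m : ℕ} (σ : Equiv.Perm (Fin m)) : PP m m :=
  Setoid.ker (Sum.elim (fun i => σ i) (fun i : Fin m => i))

section Aux
open Sum

variable {k l m n : ℕ}

lemma bigS_rel {p : PP k l} {q : PP l m} {x y} :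
    (bigS p q).r x y ↔ Relation.EqvGen (midRel p q) x y := Iff.rfl

lemma compP_rel {p : PP k l} {q : PP l m} {x y : Fin k ⊕ Fin m} :
    (compP q p).r x y ↔ (bigS p q).r (Sum.map id Sum.inr x) (Sum.map id Sum.inr y) := Iff.rfl

lemma midRel_le_bigS {p : PP k l} {q : PP l m} {x y} (h : midRel p q x y) :
    (bigS p q).r x y := Relation.EqvGen.rel _ _ h

lemma bigS_le {p : PP k l} {q : PP l m} {S : Setoid (Fin k ⊕ (Fin l ⊕ Fin m))}
    (h : ∀ x y, midRel p q x y → S.r x y) :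
    ∀ x y, (bigS p q).r x y → S.r x y := fun x y hxy =>
  Setoid.le_def.mp (Setoid.eqvGen_le h) hxy

/-- Master lemma for computing compositions. -/
lemma compP_eq {p : PP k l} {q : PP l m} (E : Setoid (Fin k ⊕ (Fin l ⊕ Fin m)))
    (h1 : ∀ x y, midRel p q x y → E.r x y)
    (h2 : ∀ x y : Fin k ⊕ Fin m, E.r (Sum.map id Sum.inr x) (Sum.map id Sum.inr y) →
      (bigS p q).r (Sum.map id Sum.inr x) (Sum.map id Sum.inr y)) :
    compP q p = Setoid.comap (Sum.map id Sum.inr) E := by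
  apply Setoid.ext; intro x y
  exact ⟨fun h => bigS_le h1 _ _ h, fun h => h2 x y h⟩

lemma compP_id_left (p : PP k l) : compP (idP l) p = p := by
  set f : Fin k ⊕ (Fin l ⊕ Fin l) → Fin k ⊕ Fin l := Sum.map id (Sum.elim id id) with hf
  have key : compP (idP l) p = Setoid.comap (Sum.map id Sum.inr) (Setoid.comap f p) := by
    apply compP_eq
    · rintro x y (⟨a, b, hab, rfl, rfl⟩ | ⟨a, b, hab, rfl, rfl⟩)
      · have ha : f (Sum.map id Sum.inl a) = a := by cases a <;> rfl
        have hb : f (Sum.map id Sum.inl b) = b := by cases b <;> rfl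
        show p.r _ _
        rw [ha, hb]; exact hab
      · have ha : f (Sum.inr a) = Sum.inr (Sum.elim id id a) := by cases a <;> rfl
        have hb : f (Sum.inr b) = Sum.inr (Sum.elim id id b) := by cases b <;> rfl
        have hab' : (Sum.elim id id a : Fin l) = Sum.elim id id b := hab
        show p.r _ _
        rw [ha, hb, hab']
    · intro x y h
      have step : ∀ t : Fin k ⊕ (Fin l ⊕ Fin l),
          Relation.EqvGen (midRel p (idP l)) t (Sum.map id Sum.inl (f t)) := by
        rintro (a | (b | b))
        · exact Relation.EqvGen.refl _
        · exact Relation.EqvGen.refl _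
        · exact Relation.EqvGen.rel _ _ (Or.inr ⟨Sum.inr b, Sum.inl b, rfl, rfl, rfl⟩)
      have hmid : Relation.EqvGen (midRel p (idP l))
          (Sum.map id Sum.inl (f (Sum.map id Sum.inr x)))
          (Sum.map id Sum.inl (f (Sum.map id Sum.inr y))) :=
        Relation.EqvGen.rel _ _ (Or.inl ⟨_, _, h, rfl, rfl⟩)
      exact ((step _).trans _ _ _ hmid).trans _ _ _ ((step _).symm _ _)
  rw [key]
  apply Setoid.ext; intro x y
  show p.r (f (Sum.map id Sum.inr x)) (f (Sum.map id Sum.inr y)) ↔ p.r x y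
  have : ∀ t : Fin k ⊕ Fin l, f (Sum.map id Sum.inr t) = t := by rintro (a | b) <;> rfl
  rw [this, this]

lemma compP_id_right (p : PP k l) : compP p (idP k) = p := by
  set f : Fin k ⊕ (Fin k ⊕ Fin l) → Fin k ⊕ Fin l :=
    Sum.elim Sum.inl (Sum.elim Sum.inl Sum.inr) with hf
  have key : compP p (idP k) = Setoid.comap (Sum.map id Sum.inr) (Setoid.comap f p) := by
    apply compP_eq
    · rintro x y (⟨a, b, hab, rfl, rfl⟩ | ⟨a, b, hab, rfl, rfl⟩)
      · have ha : f (Sum.map id Sum.inl a) = Sum.inl (Sum.elim id id a) := by cases a <;> rfl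
        have hb : f (Sum.map id Sum.inl b) = Sum.inl (Sum.elim id id b) := by cases b <;> rfl
        have hab' : (Sum.elim id id a : Fin k) = Sum.elim id id b := hab
        show p.r _ _
        rw [ha, hb, hab']
      · have ha : f (Sum.inr a) = a := by cases a <;> rfl
        have hb : f (Sum.inr b) = b := by cases b <;> rfl
        show p.r _ _
        rw [ha, hb]; exact hab
    · intro x y h
      have step : ∀ t : Fin k ⊕ (Fin k ⊕ Fin l),
          Relation.EqvGen (midRel (idP k) p) t (Sum.inr (f t)) := by
        rintro (a | (a | b))
        · exact Relation.EqvGen.rel _ _ (Or.inl ⟨Sum.inl a, Sum.inr a, rfl, rfl, rfl⟩)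
        · exact Relation.EqvGen.refl _
        · exact Relation.EqvGen.refl _
      have hmid : Relation.EqvGen (midRel (idP k) p)
          (Sum.inr (f (Sum.map id Sum.inr x))) (Sum.inr (f (Sum.map id Sum.inr y))) :=
        Relation.EqvGen.rel _ _ (Or.inr ⟨_, _, h, rfl, rfl⟩)
      exact ((step _).trans _ _ _ hmid).trans _ _ _ ((step _).symm _ _)
  rw [key]
  apply Setoid.ext; intro x y
  show p.r (f (Sum.map id Sum.inr x)) (f (Sum.map id Sum.inr y)) ↔ p.r x y
  have : ∀ t : Fin k ⊕ Fin l, f (Sum.map id Sum.inr t) = t := by rintro (a | b) <;> rfl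
  rw [this, this]

end Aux
section Glue
variable {α Y Z κ : Type*}

/-- The relation gluing middle-only points `α` onto a setoid `B` on `Y`,
mediated by a setoid `M` on `Z`. -/
def glueRel (M : Setoid Z) (B : Setoid Y) (gl : α → Z) (u : κ → Z) (v : κ → Y) :
    (α ⊕ Y) → (α ⊕ Y) → Prop
  | .inr y1, .inr y2 => B.r y1 y2
  | .inl a, .inr y2 => ∃ z : κ, M.r (gl a) (u z) ∧ B.r (v z) y2
  | .inr y1, .inl a => ∃ z : κ, M.r (gl a) (u z) ∧ B.r (v z) y1
  | .inl a, .inl a' => M.r (gl a) (gl a') ∨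
      ∃ z z' : κ, M.r (gl a) (u z) ∧ B.r (v z) (v z') ∧ M.r (u z') (gl a')

def glue (M : Setoid Z) (B : Setoid Y) (gl : α → Z) (u : κ → Z) (v : κ → Y)
    (hMB : ∀ a b : κ, M.r (u a) (u b) → B.r (v a) (v b)) : Setoid (α ⊕ Y) where
  r := glueRel M B gl u v
  iseqv := by
    constructor
    · rintro (a | y)
      · exact Or.inl (M.refl' _)
      · exact B.refl' _
    · rintro (a | y) (a' | y') h
      · rcases h with h | ⟨z, z', h1, h2, h3⟩
        · exact Or.inl (M.symm' h)
        · exact Or.inr ⟨z', z, M.symm' h3, B.symm' h2, M.symm' h1⟩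
      · exact h
      · exact h
      · exact B.symm' h
    · rintro (a | y) (a' | y') (a'' | y'') h1 h2
      · -- inl inl inl
        rcases h1 with h1 | ⟨z, z', hz1, hz2, hz3⟩
        · rcases h2 with h2 | ⟨w, w', hw1, hw2, hw3⟩
          · exact Or.inl (M.trans' h1 h2)
          · exact Or.inr ⟨w, w', M.trans' h1 hw1, hw2, hw3⟩
        · rcases h2 with h2 | ⟨w, w', hw1, hw2, hw3⟩
          · exact Or.inr ⟨z, z', hz1, hz2, M.trans' hz3 h2⟩
          · refine Or.inr ⟨z, w', hz1, ?_, hw3⟩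
            exact B.trans' hz2 (B.trans' (hMB _ _ (M.trans' hz3 hw1)) hw2)
      · -- inl inl inr
        rcases h1 with h1 | ⟨z, z', hz1, hz2, hz3⟩
        · obtain ⟨w, hw1, hw2⟩ := h2
          exact ⟨w, M.trans' h1 hw1, hw2⟩
        · obtain ⟨w, hw1, hw2⟩ := h2
          exact ⟨z, hz1, B.trans' hz2 (B.trans' (hMB _ _ (M.trans' hz3 hw1)) hw2)⟩
      · -- inl inr inl
        obtain ⟨z, hz1, hz2⟩ := h1
        obtain ⟨w, hw1, hw2⟩ := h2
        exact Or.inr ⟨z, w, hz1, B.trans' hz2 (B.symm' hw2), M.symm' hw1⟩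
      · -- inl inr inr
        obtain ⟨z, hz1, hz2⟩ := h1
        exact ⟨z, hz1, B.trans' hz2 h2⟩
      · -- inr inl inl
        obtain ⟨z, hz1, hz2⟩ := h1
        rcases h2 with h2 | ⟨w, w', hw1, hw2, hw3⟩
        · exact ⟨z, M.trans' (M.symm' h2) hz1, hz2⟩
        · refine ⟨w', M.symm' hw3, ?_⟩
          exact B.trans' (B.symm' hw2) (B.trans' (hMB _ _ (M.trans' (M.symm' hw1) hz1)) hz2)
      · -- inr inl inr
        obtain ⟨z, hz1, hz2⟩ := h1
        obtain ⟨w, hw1, hw2⟩ := h2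
        exact B.trans' (B.symm' hz2) (B.trans' (hMB _ _ (M.trans' (M.symm' hz1) hw1)) hw2)
      · -- inr inr inl
        obtain ⟨w, hw1, hw2⟩ := h2
        exact ⟨w, hw1, B.trans' hw2 (B.symm' h1)⟩
      · -- inr inr inr
        exact B.trans' h1 h2

end Glue
section Assoc
variable {k l m n : ℕ} (p : PP k l) (q : PP l m) (r : PP m n)

/-- The three-relation generator on the four-row space. -/
def tripleRel : (Fin k ⊕ (Fin l ⊕ (Fin m ⊕ Fin n))) → (Fin k ⊕ (Fin l ⊕ (Fin m ⊕ Fin n))) → Prop :=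
  fun x y =>
    (∃ a b, p.r a b ∧ x = Sum.map id Sum.inl a ∧ y = Sum.map id Sum.inl b) ∨
    (∃ a b, q.r a b ∧ x = Sum.inr (Sum.map id Sum.inl a) ∧ y = Sum.inr (Sum.map id Sum.inl b)) ∨
    (∃ a b, r.r a b ∧ x = Sum.inr (Sum.inr a) ∧ y = Sum.inr (Sum.inr b))

def bigG : Setoid (Fin k ⊕ (Fin l ⊕ (Fin m ⊕ Fin n))) :=
  Relation.EqvGen.setoid (tripleRel p q r)

/-- Embedding of the upper three rows. -/
def zetaU : (Fin k ⊕ (Fin l ⊕ Fin m)) → (Fin k ⊕ (Fin l ⊕ (Fin m ⊕ Fin n))) :=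
  Sum.map id (Sum.map id Sum.inl)

/-- Embedding of the lower three rows. -/
def zetaL : (Fin l ⊕ (Fin m ⊕ Fin n)) → (Fin k ⊕ (Fin l ⊕ (Fin m ⊕ Fin n))) := Sum.inr

lemma bigS_le_G_upper : ∀ x y, (bigS p q).r x y →
    (bigG p q r).r (zetaU x) (zetaU y) := by
  apply bigS_le (S := Setoid.comap zetaU (bigG p q r))
  rintro x y (⟨a, b, hab, rfl, rfl⟩ | ⟨a, b, hab, rfl, rfl⟩)
  · have ha : ∀ a : Fin k ⊕ Fin l, zetaU (m := m) (n := n) (Sum.map id Sum.inl a) = Sum.map id Sum.inl a := by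
      rintro (a | a) <;> rfl
    show (bigG p q r).r _ _
    rw [ha, ha]
    exact Relation.EqvGen.rel _ _ (Or.inl ⟨a, b, hab, rfl, rfl⟩)
  · have ha : ∀ a : Fin l ⊕ Fin m, zetaU (k := k) (n := n) (Sum.inr a) = Sum.inr (Sum.map id Sum.inl a) := by
      rintro (a | a) <;> rfl
    show (bigG p q r).r _ _
    rw [ha, ha]
    exact Relation.EqvGen.rel _ _ (Or.inr (Or.inl ⟨a, b, hab, rfl, rfl⟩))

lemma bigS_le_G_lower : ∀ x y, (bigS q r).r x y →
    (bigG p q r).r (zetaL x) (zetaL y) := by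
  apply bigS_le (S := Setoid.comap zetaL (bigG p q r))
  rintro x y (⟨a, b, hab, rfl, rfl⟩ | ⟨a, b, hab, rfl, rfl⟩)
  · exact Relation.EqvGen.rel _ _ (Or.inr (Or.inl ⟨a, b, hab, rfl, rfl⟩))
  · exact Relation.EqvGen.rel _ _ (Or.inr (Or.inr ⟨a, b, hab, rfl, rfl⟩))

/-- Collapse of the four-row space for the left association. -/
def piL : (Fin k ⊕ (Fin l ⊕ (Fin m ⊕ Fin n))) → (Fin l ⊕ (Fin k ⊕ (Fin m ⊕ Fin n)))
  | .inl a => .inr (.inl a)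
  | .inr (.inl b) => .inl b
  | .inr (.inr v) => .inr (.inr v)

def glueL : Setoid (Fin l ⊕ (Fin k ⊕ (Fin m ⊕ Fin n))) :=
  glue (bigS p q) (bigS (compP q p) r)
    (fun b => Sum.inr (Sum.inl b)) (Sum.map id Sum.inr) (Sum.map id Sum.inl)
    (fun a b h => Relation.EqvGen.rel _ _ (Or.inl ⟨a, b, h, rfl, rfl⟩))

lemma tripleRel_le_glueL : ∀ x y, tripleRel p q r x y →
    (glueL p q r).r (piL x) (piL y) := by
  rintro x y (⟨a, b, hab, rfl, rfl⟩ | ⟨a, b, hab, rfl, rfl⟩ | ⟨a, b, hab, rfl, rfl⟩)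
  · -- p-edge
    rcases a with a | a <;> rcases b with b | b
    · -- k k
      exact Relation.EqvGen.rel _ _
        (Or.inl ⟨Sum.inl a, Sum.inl b, Relation.EqvGen.rel _ _ (Or.inl ⟨_, _, hab, rfl, rfl⟩),
          rfl, rfl⟩)
    · -- k l : piL x = inr (inl a), piL y = inl b
      exact ⟨Sum.inl a,
        (bigS p q).symm' (Relation.EqvGen.rel _ _ (Or.inl ⟨_, _, hab, rfl, rfl⟩)),
        (bigS (compP q p) r).refl' _⟩
    · -- l k
      exact ⟨Sum.inl b,
        Relation.EqvGen.rel _ _ (Or.inl ⟨_, _, hab, rfl, rfl⟩),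
        (bigS (compP q p) r).refl' _⟩
    · -- l l
      exact Or.inl (Relation.EqvGen.rel _ _ (Or.inl ⟨_, _, hab, rfl, rfl⟩))
  · -- q-edge
    rcases a with a | a <;> rcases b with b | b
    · -- l l
      exact Or.inl (Relation.EqvGen.rel _ _ (Or.inr ⟨_, _, hab, rfl, rfl⟩))
    · -- l m
      exact ⟨Sum.inr b,
        Relation.EqvGen.rel _ _ (Or.inr ⟨_, _, hab, rfl, rfl⟩),
        (bigS (compP q p) r).refl' _⟩
    · -- m l
      exact ⟨Sum.inr a,
        (bigS p q).symm' (Relation.EqvGen.rel _ _ (Or.inr ⟨_, _, hab, rfl, rfl⟩)),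
        (bigS (compP q p) r).refl' _⟩
    · -- m m
      exact Relation.EqvGen.rel _ _
        (Or.inl ⟨Sum.inr a, Sum.inr b, Relation.EqvGen.rel _ _ (Or.inr ⟨_, _, hab, rfl, rfl⟩),
          rfl, rfl⟩)
  · -- r-edge
    exact Relation.EqvGen.rel _ _ (Or.inr ⟨a, b, hab, rfl, rfl⟩)

lemma lemmaA : bigS (compP q p) r =
    Setoid.comap (Sum.map id Sum.inr) (bigG p q r) := by
  apply Setoid.ext; intro x y
  constructor
  · refine bigS_le (S := Setoid.comap (Sum.map id Sum.inr) (bigG p q r)) ?_ x y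
    rintro x y (⟨a, b, hab, rfl, rfl⟩ | ⟨a, b, hab, rfl, rfl⟩)
    · have h := bigS_le_G_upper p q r _ _ hab
      have key : ∀ a : Fin k ⊕ Fin m,
          zetaU (Sum.map id Sum.inr a) =
            (Sum.map id Sum.inr : _ → Fin k ⊕ (Fin l ⊕ (Fin m ⊕ Fin n)))
              (Sum.map id Sum.inl a) := by rintro (a | a) <;> rfl
      show (bigG p q r).r _ _
      rw [← key, ← key]
      exact h
    · exact Relation.EqvGen.rel _ _ (Or.inr (Or.inr ⟨a, b, hab, rfl, rfl⟩))
  · intro h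
    have h2 : ∀ x y, (bigG p q r).r x y → (glueL p q r).r (piL x) (piL y) := fun x y hxy =>
      Setoid.le_def.mp (Setoid.eqvGen_le (s := Setoid.comap piL (glueL p q r))
        (fun x y h => tripleRel_le_glueL p q r x y h)) hxy
    have h3 := h2 _ _ h
    have key : ∀ x : Fin k ⊕ (Fin m ⊕ Fin n),
        piL ((Sum.map id Sum.inr : _ → Fin k ⊕ (Fin l ⊕ (Fin m ⊕ Fin n))) x) = Sum.inr x := by
      rintro (a | v) <;> rfl
    rw [key, key] at h3
    exact h3
end Assoc
section Assoc2
variable {k l m n : ℕ} (p : PP k l) (q : PP l m) (r : PP m n)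

/-- Collapse of the four-row space for the right association. -/
def piR : (Fin k ⊕ (Fin l ⊕ (Fin m ⊕ Fin n))) → (Fin m ⊕ (Fin k ⊕ (Fin l ⊕ Fin n)))
  | .inl a => .inr (.inl a)
  | .inr (.inl b) => .inr (.inr (.inl b))
  | .inr (.inr (.inl c)) => .inl c
  | .inr (.inr (.inr d)) => .inr (.inr (.inr d))

def glueR : Setoid (Fin m ⊕ (Fin k ⊕ (Fin l ⊕ Fin n))) :=
  glue (bigS q r) (bigS p (compP r q))
    (fun c => Sum.inr (Sum.inl c)) (Sum.map id Sum.inr) Sum.inr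
    (fun a b h => Relation.EqvGen.rel _ _ (Or.inr ⟨a, b, h, rfl, rfl⟩))

lemma tripleRel_le_glueR : ∀ x y, tripleRel p q r x y →
    (glueR p q r).r (piR x) (piR y) := by
  rintro x y (⟨a, b, hab, rfl, rfl⟩ | ⟨a, b, hab, rfl, rfl⟩ | ⟨a, b, hab, rfl, rfl⟩)
  · -- p-edge : both Y-type
    have key : ∀ a : Fin k ⊕ Fin l,
        piR (n := n) (m := m) (Sum.map id Sum.inl a) = Sum.inr (Sum.map id Sum.inl a) := by
      rintro (a | a) <;> rfl
    rw [key, key]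
    show (bigS p (compP r q)).r _ _
    exact Relation.EqvGen.rel _ _ (Or.inl ⟨a, b, hab, rfl, rfl⟩)
  · -- q-edge
    rcases a with a | a <;> rcases b with b | b
    · -- l l
      exact Relation.EqvGen.rel _ _
        (Or.inr ⟨Sum.inl a, Sum.inl b, Relation.EqvGen.rel _ _ (Or.inl ⟨_, _, hab, rfl, rfl⟩),
          rfl, rfl⟩)
    · -- l m : piR x = inr (inr (inl a)), piR y = inl b
      exact ⟨Sum.inl a,
        (bigS q r).symm' (Relation.EqvGen.rel _ _ (Or.inl ⟨_, _, hab, rfl, rfl⟩)),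
        (bigS p (compP r q)).refl' _⟩
    · -- m l
      exact ⟨Sum.inl b,
        Relation.EqvGen.rel _ _ (Or.inl ⟨_, _, hab, rfl, rfl⟩),
        (bigS p (compP r q)).refl' _⟩
    · -- m m
      exact Or.inl (Relation.EqvGen.rel _ _ (Or.inl ⟨_, _, hab, rfl, rfl⟩))
  · -- r-edge
    rcases a with a | a <;> rcases b with b | b
    · -- m m
      exact Or.inl (Relation.EqvGen.rel _ _ (Or.inr ⟨_, _, hab, rfl, rfl⟩))
    · -- m n
      exact ⟨Sum.inr b,
        Relation.EqvGen.rel _ _ (Or.inr ⟨_, _, hab, rfl, rfl⟩),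
        (bigS p (compP r q)).refl' _⟩
    · -- n m
      exact ⟨Sum.inr a,
        (bigS q r).symm' (Relation.EqvGen.rel _ _ (Or.inr ⟨_, _, hab, rfl, rfl⟩)),
        (bigS p (compP r q)).refl' _⟩
    · -- n n
      exact Relation.EqvGen.rel _ _
        (Or.inr ⟨Sum.inr a, Sum.inr b, Relation.EqvGen.rel _ _ (Or.inr ⟨_, _, hab, rfl, rfl⟩),
          rfl, rfl⟩)

def embR : (Fin k ⊕ (Fin l ⊕ Fin n)) → (Fin k ⊕ (Fin l ⊕ (Fin m ⊕ Fin n))) :=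
  Sum.map id (Sum.map id Sum.inr)

lemma lemmaB : bigS p (compP r q) =
    Setoid.comap (embR (m := m)) (bigG p q r) := by
  apply Setoid.ext; intro x y
  constructor
  · refine bigS_le (S := Setoid.comap embR (bigG p q r)) ?_ x y
    rintro x y (⟨a, b, hab, rfl, rfl⟩ | ⟨a, b, hab, rfl, rfl⟩)
    · have key : ∀ a : Fin k ⊕ Fin l,
          embR (m := m) (n := n) (Sum.map id Sum.inl a) = Sum.map id Sum.inl a := by
        rintro (a | a) <;> rfl
      show (bigG p q r).r _ _
      rw [key, key]
      exact Relation.EqvGen.rel _ _ (Or.inl ⟨a, b, hab, rfl, rfl⟩)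
    · have h := bigS_le_G_lower p q r _ _ hab
      have key : ∀ a : Fin l ⊕ Fin n,
          embR (k := k) (Sum.inr a) = zetaL (k := k) (m := m) (Sum.map id Sum.inr a) := by
        rintro (a | a) <;> rfl
      show (bigG p q r).r _ _
      rw [key, key]
      exact h
  · intro h
    have h2 : ∀ x y, (bigG p q r).r x y → (glueR p q r).r (piR x) (piR y) := fun x y hxy =>
      Setoid.le_def.mp (Setoid.eqvGen_le (s := Setoid.comap piR (glueR p q r))
        (fun x y h => tripleRel_le_glueR p q r x y h)) hxy
    have h3 := h2 _ _ h
    have key : ∀ x : Fin k ⊕ (Fin l ⊕ Fin n),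
        piR (embR (m := m) x) = Sum.inr x := by
      rintro (a | (b | d)) <;> rfl
    rw [key, key] at h3
    exact h3

theorem compP_assoc_s14 : compP r (compP q p) = compP (compP r q) p := by
  apply Setoid.ext; intro x y
  show (bigS (compP q p) r).r _ _ ↔ (bigS p (compP r q)).r _ _
  rw [lemmaA p q r, lemmaB p q r]
  show (bigG p q r).r _ _ ↔ (bigG p q r).r _ _
  have key : ∀ x : Fin k ⊕ Fin n,
      (Sum.map id Sum.inr : _ → Fin k ⊕ (Fin l ⊕ (Fin m ⊕ Fin n)))
        ((Sum.map id Sum.inr : _ → Fin k ⊕ (Fin m ⊕ Fin n)) x) =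
      embR ((Sum.map id Sum.inr : _ → Fin k ⊕ (Fin l ⊕ Fin n)) x) := by
    rintro (a | d) <;> rfl
  rw [key, key]
end Assoc2
section Swap
variable {k l m : ℕ}

lemma swapP_rel (p : PP k l) (x y) : (swapP p).r x y ↔ p.r (Sum.swap x) (Sum.swap y) := Iff.rfl

lemma swapP_swapP (p : PP k l) : swapP (swapP p) = p := by
  apply Setoid.ext; intro x y
  show p.r (Sum.swap (Sum.swap x)) (Sum.swap (Sum.swap y)) ↔ p.r x y
  rw [Sum.swap_swap, Sum.swap_swap]

/-- Transport of `bigS` along a bijection that matches the generators. -/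
lemma bigS_transport {k' l' m' : ℕ} (p : PP k l) (q : PP l m) (p' : PP k' l') (q' : PP l' m')
    (f : (Fin k' ⊕ (Fin l' ⊕ Fin m')) → (Fin k ⊕ (Fin l ⊕ Fin m)))
    (g : (Fin k ⊕ (Fin l ⊕ Fin m)) → (Fin k' ⊕ (Fin l' ⊕ Fin m')))
    (hgf : ∀ x, g (f x) = x)
    (h1 : ∀ x y, midRel p' q' x y → Relation.EqvGen (midRel p q) (f x) (f y))
    (h2 : ∀ x y, midRel p q x y → Relation.EqvGen (midRel p' q') (g x) (g y)) :
    bigS p' q' = Setoid.comap f (bigS p q) := by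
  apply Setoid.ext; intro x y
  constructor
  · exact fun h => bigS_le (S := Setoid.comap f (bigS p q)) h1 x y h
  · intro h
    have aux : ∀ a b, Relation.EqvGen (midRel p q) a b →
        Relation.EqvGen (midRel p' q') (g a) (g b) := by
      intro a b hab
      induction hab with
      | rel a b h => exact h2 a b h
      | refl a => exact Relation.EqvGen.refl _
      | symm a b _ ih => exact ih.symm _ _
      | trans a b c _ _ ih1 ih2 => exact ih1.trans _ _ _ ih2
    have := aux _ _ h
    rwa [hgf, hgf] at this

/-- The reversal map used for `swapP (compP q p)`. -/
def revMap (k l m : ℕ) : (Fin m ⊕ (Fin l ⊕ Fin k)) → (Fin k ⊕ (Fin l ⊕ Fin m))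
  | .inl c => .inr (.inr c)
  | .inr (.inl b) => .inr (.inl b)
  | .inr (.inr a) => .inl a

lemma bigS_swap (p : PP k l) (q : PP l m) :
    bigS (swapP q) (swapP p) = Setoid.comap (revMap k l m) (bigS p q) := by
  apply bigS_transport p q (swapP q) (swapP p) (revMap k l m) (revMap m l k)
  · rintro (c | (b | a)) <;> rfl
  · rintro x y (⟨a, b, hab, rfl, rfl⟩ | ⟨a, b, hab, rfl, rfl⟩)
    · -- (swapP q)-edges, a b : Fin m ⊕ Fin l
      have key : ∀ a : Fin m ⊕ Fin l,
          revMap k l m (Sum.map id Sum.inl a) = Sum.inr (Sum.swap a) := by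
        rintro (c | b) <;> rfl
      rw [key, key]
      exact Relation.EqvGen.rel _ _ (Or.inr ⟨Sum.swap a, Sum.swap b, hab, rfl, rfl⟩)
    · -- (swapP p)-edges, a b : Fin l ⊕ Fin k
      have key : ∀ a : Fin l ⊕ Fin k,
          revMap k l m (Sum.inr a) = Sum.map id Sum.inl (Sum.swap a) := by
        rintro (b | a) <;> rfl
      rw [key, key]
      exact Relation.EqvGen.rel _ _ (Or.inl ⟨Sum.swap a, Sum.swap b, hab, rfl, rfl⟩)
  · rintro x y (⟨a, b, hab, rfl, rfl⟩ | ⟨a, b, hab, rfl, rfl⟩)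
    · -- p-edges, a b : Fin k ⊕ Fin l
      have key : ∀ a : Fin k ⊕ Fin l,
          revMap m l k (Sum.map id Sum.inl a) = Sum.inr (Sum.swap a) := by
        rintro (a | b) <;> rfl
      rw [key, key]
      have hab' : (swapP p).r (Sum.swap a) (Sum.swap b) := by
        show p.r _ _
        rw [Sum.swap_swap, Sum.swap_swap]; exact hab
      exact Relation.EqvGen.rel _ _ (Or.inr ⟨Sum.swap a, Sum.swap b, hab', rfl, rfl⟩)
    · -- q-edges, a b : Fin l ⊕ Fin m
      have key : ∀ a : Fin l ⊕ Fin m,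
          revMap m l k (Sum.inr a) = Sum.map id Sum.inl (Sum.swap a) := by
        rintro (b | c) <;> rfl
      rw [key, key]
      have hab' : (swapP q).r (Sum.swap a) (Sum.swap b) := by
        show q.r _ _
        rw [Sum.swap_swap, Sum.swap_swap]; exact hab
      exact Relation.EqvGen.rel _ _ (Or.inl ⟨Sum.swap a, Sum.swap b, hab', rfl, rfl⟩)

lemma swapP_compP (p : PP k l) (q : PP l m) :
    swapP (compP q p) = compP (swapP p) (swapP q) := by
  apply Setoid.ext; intro x y
  show (bigS p q).r (Sum.map id Sum.inr (Sum.swap x)) (Sum.map id Sum.inr (Sum.swap y)) ↔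
    (bigS (swapP q) (swapP p)).r (Sum.map id Sum.inr x) (Sum.map id Sum.inr y)
  rw [bigS_swap p q]
  show _ ↔ (bigS p q).r (revMap k l m (Sum.map id Sum.inr x)) (revMap k l m (Sum.map id Sum.inr y))
  have key : ∀ x : Fin m ⊕ Fin k,
      revMap k l m (Sum.map id Sum.inr x) = Sum.map id Sum.inr (Sum.swap x) := by
    rintro (c | a) <;> rfl
  rw [key, key]

end Swap
section Perm
variable {t : ℕ}

lemma permP_rel (σ : Equiv.Perm (Fin t)) (x y) :
    (permP σ).r x y ↔ Sum.elim (fun i => σ i) (fun i : Fin t => i) x =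
      Sum.elim (fun i => σ i) (fun i : Fin t => i) y := Iff.rfl

lemma permP_one : permP (1 : Equiv.Perm (Fin t)) = idP t := rfl

lemma swapP_permP (σ : Equiv.Perm (Fin t)) : swapP (permP σ) = permP σ⁻¹ := by
  apply Setoid.ext
  rintro (i | i) (j | j) <;>
    · show Sum.elim (fun i => σ i) _ _ = Sum.elim _ _ _ ↔
        Sum.elim (fun i => σ⁻¹ i) _ _ = Sum.elim _ _ _
      simp [Sum.swap, Equiv.Perm.inv_eq_iff_eq, Equiv.Perm.eq_inv_iff_eq, eq_comm, Equiv.eq_symm_apply, Equiv.symm_apply_eq]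

lemma permP_mul (σ τ : Equiv.Perm (Fin t)) :
    compP (permP σ) (permP τ) = permP (σ * τ) := by
  set g : Fin t ⊕ (Fin t ⊕ Fin t) → Fin t :=
    Sum.elim (fun i => σ (τ i)) (Sum.elim (fun j => σ j) id) with hg
  have key : compP (permP σ) (permP τ) =
      Setoid.comap (Sum.map id Sum.inr) (Setoid.ker g) := by
    apply compP_eq
    · rintro x y (⟨a, b, hab, rfl, rfl⟩ | ⟨a, b, hab, rfl, rfl⟩)
      · have ha : ∀ a : Fin t ⊕ Fin t, g (Sum.map id Sum.inl a) =
            σ (Sum.elim (fun i => τ i) (fun i => i) a) := by rintro (i | j) <;> rfl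
        show g _ = g _
        rw [ha, ha]
        exact congrArg σ hab
      · have ha : ∀ a : Fin t ⊕ Fin t, g (Sum.inr a) =
            Sum.elim (fun i => σ i) (fun i => i) a := by rintro (i | j) <;> rfl
        show g _ = g _
        rw [ha, ha]
        exact hab
    · intro x y h
      have hval : ∀ x : Fin t ⊕ Fin t, g (Sum.map id Sum.inr x) =
          Sum.elim (fun i => σ (τ i)) id x := by rintro (i | j) <;> rfl
      have chain : ∀ x : Fin t ⊕ Fin t,
          Relation.EqvGen (midRel (permP τ) (permP σ)) (Sum.map id Sum.inr x)
            (Sum.inr (Sum.inr (Sum.elim (fun i => σ (τ i)) id x))) := by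
        rintro (i | j)
        · refine Relation.EqvGen.trans _ (Sum.inr (Sum.inl (τ i))) _ ?_ ?_
          · exact Relation.EqvGen.rel _ _ (Or.inl ⟨Sum.inl i, Sum.inr (τ i), rfl, rfl, rfl⟩)
          · exact Relation.EqvGen.rel _ _ (Or.inr ⟨Sum.inl (τ i), Sum.inr (σ (τ i)), rfl, rfl, rfl⟩)
        · exact Relation.EqvGen.refl _
      have h' : (Sum.elim (fun i => σ (τ i)) id x : Fin t) = Sum.elim (fun i => σ (τ i)) id y := by
        have h2 : g (Sum.map id Sum.inr x) = g (Sum.map id Sum.inr y) := h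
        rwa [hval, hval] at h2
      refine ((chain x).trans _ _ _ ?_).trans _ _ _ ((chain y).symm _ _)
      rw [h']
      exact Relation.EqvGen.refl _
  rw [key]
  apply Setoid.ext; intro x y
  show g (Sum.map id Sum.inr x) = g (Sum.map id Sum.inr y) ↔ _
  have hval : ∀ x : Fin t ⊕ Fin t, g (Sum.map id Sum.inr x) =
      Sum.elim (fun i => (σ * τ) i) (fun i => i) x := by rintro (i | j) <;> rfl
  rw [hval, hval]
  exact Iff.rfl
end Perm

section Building
variable {k t : ℕ}

/-- For a building partition, composing with its reflection yields the identity. -/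
lemma building_inv (pu : PP k t)
    (h1 : ∀ b b' : Fin t, pu.r (Sum.inr b) (Sum.inr b') → b = b')
    (h2 : ∀ b : Fin t, ∃ a : Fin k, pu.r (Sum.inl a) (Sum.inr b)) :
    compP pu (swapP pu) = idP t := by
  set g : Fin t ⊕ (Fin k ⊕ Fin t) → Quotient pu :=
    Sum.elim (fun b => Quotient.mk pu (Sum.inr b))
      (Sum.elim (fun a => Quotient.mk pu (Sum.inl a)) (fun b => Quotient.mk pu (Sum.inr b)))
    with hgdef
  have hgen : ∀ x y, midRel (swapP pu) pu x y → g x = g y := by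
    rintro x y (⟨a, b, hab, rfl, rfl⟩ | ⟨a, b, hab, rfl, rfl⟩)
    · have key : ∀ a : Fin t ⊕ Fin k, g (Sum.map id Sum.inl a) =
          Quotient.mk pu (Sum.swap a) := by rintro (b | a) <;> rfl
      rw [key, key]
      exact Quotient.sound hab
    · have key : ∀ a : Fin k ⊕ Fin t, g (Sum.inr a) = Quotient.mk pu a := by
        rintro (a | b) <;> rfl
      rw [key, key]
      exact Quotient.sound hab
  have chain : ∀ b : Fin t, Relation.EqvGen (midRel (swapP pu) pu)
      (Sum.inl b) (Sum.inr (Sum.inr b)) := by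
    intro b
    obtain ⟨a, ha⟩ := h2 b
    refine Relation.EqvGen.trans _ (Sum.inr (Sum.inl a)) _ ?_ ?_
    · refine Relation.EqvGen.rel _ _ (Or.inl ⟨Sum.inl b, Sum.inr a, ?_, rfl, rfl⟩)
      exact pu.symm' ha
    · exact Relation.EqvGen.rel _ _ (Or.inr ⟨Sum.inl a, Sum.inr b, ha, rfl, rfl⟩)
  apply Setoid.ext; intro x y
  constructor
  · intro h
    have hg := bigS_le (S := Setoid.ker g) hgen _ _ h
    have hval : ∀ x : Fin t ⊕ Fin t, g (Sum.map id Sum.inr x) =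
        Quotient.mk pu (Sum.inr (Sum.elim id id x)) := by rintro (b | b) <;> rfl
    have hg' : Quotient.mk pu (Sum.inr (Sum.elim id id x)) =
        Quotient.mk pu (Sum.inr (Sum.elim id id y)) := by
      rw [← hval, ← hval]; exact hg
    have := h1 _ _ (Quotient.exact hg')
    show (Sum.elim (fun i => i) (fun i => i) x : Fin t) = Sum.elim (fun i => i) (fun i => i) y
    cases x <;> cases y <;> exact this
  · intro h
    have h' : (Sum.elim id id x : Fin t) = Sum.elim id id y := h
    show Relation.EqvGen _ _ _
    have step : ∀ x : Fin t ⊕ Fin t, Relation.EqvGen (midRel (swapP pu) pu)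
        (Sum.map id Sum.inr x) (Sum.inr (Sum.inr (Sum.elim id id x))) := by
      rintro (b | b)
      · exact chain b
      · exact Relation.EqvGen.refl _
    refine ((step x).trans _ _ _ ?_).trans _ _ _ ((step y).symm _ _)
    rw [h']
    exact Relation.EqvGen.refl _
end Building
/-- for a projective partition `p ∈ C(k,k)` with `t(p) > 0` and
through-block decomposition `p = p_u* p_u`, the set
`Sym(p) = {σ : p_u* r_σ p_u ∈ C}` is a subgroup of `S_{t(p)}`. -/
theorem symmetry_group_is_subgroup (C : PartitionCategory) {k : ℕ} (p : PP k k)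
    (hmem : p ∈ C.mem k k) (hp : isProjective p) (ht : 0 < tP p)
    (pu : PP k (tP p)) (hpu : isBuilding pu) (hdec : p = compP (swapP pu) pu) :
    ∃ H : Subgroup (Equiv.Perm (Fin (tP p))),
      ∀ σ, σ ∈ H ↔ compP (swapP pu) (compP (permP σ) pu) ∈ C.mem k k := by
  have hinv : compP pu (swapP pu) = idP (tP p) := building_inv pu hpu.1 hpu.2.1
  have hFone : compP (swapP pu) (compP (permP (1 : Equiv.Perm (Fin (tP p)))) pu) = p := by
    rw [permP_one, compP_id_left]; exact hdec.symm
  have hFmul : ∀ σ τ : Equiv.Perm (Fin (tP p)),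
      compP (compP (swapP pu) (compP (permP σ) pu)) (compP (swapP pu) (compP (permP τ) pu)) =
      compP (swapP pu) (compP (permP (σ * τ)) pu) := by
    intro σ τ
    rw [compP_assoc_s14 pu (permP τ) (swapP pu),
      compP_assoc_s14 pu (compP (swapP pu) (permP τ)) (compP (swapP pu) (compP (permP σ) pu)),
      compP_assoc_s14 (permP τ) (swapP pu) (compP (swapP pu) (compP (permP σ) pu)),
      ← compP_assoc_s14 (swapP pu) (compP (permP σ) pu) (swapP pu),
      ← compP_assoc_s14 (swapP pu) pu (permP σ), hinv, compP_id_right (permP σ),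
      ← compP_assoc_s14 (permP τ) (permP σ) (swapP pu), permP_mul σ τ,
      ← compP_assoc_s14 pu (permP (σ * τ)) (swapP pu)]
  have hFinv : ∀ σ : Equiv.Perm (Fin (tP p)),
      swapP (compP (swapP pu) (compP (permP σ) pu)) =
      compP (swapP pu) (compP (permP σ⁻¹) pu) := by
    intro σ
    rw [swapP_compP, swapP_compP, swapP_swapP, swapP_permP,
      ← compP_assoc_s14 pu (permP σ⁻¹) (swapP pu)]
  refine ⟨{
      carrier := {σ | compP (swapP pu) (compP (permP σ) pu) ∈ C.mem k k}
      one_mem' := by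
        show compP (swapP pu) (compP (permP (1 : Equiv.Perm (Fin (tP p)))) pu) ∈ C.mem k k
        rw [hFone]; exact hmem
      mul_mem' := by
        intro a b ha hb
        show compP (swapP pu) (compP (permP (a * b)) pu) ∈ C.mem k k
        rw [← hFmul a b]
        exact C.comp_mem _ _ ha hb
      inv_mem' := by
        intro a ha
        show compP (swapP pu) (compP (permP a⁻¹) pu) ∈ C.mem k k
        rw [← hFinv a]
        exact C.swap_mem _ ha }, fun σ => Iff.rfl⟩
end

section
/- In the category NC of all noncrossing partitions, two projective partitions p ∈ NC(k,k) and q ∈ NC(l,l) are equivalent (there exists r ∈ NC(k,l) with r*r = p and rr* = q) if and only if t(p) = t(q). -/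
namespace NCaux

open Sum

variable {k l : ℕ}

/-- Projection from the three-row index set back to the two rows of `r`. -/
def psi (k l : ℕ) : (Fin k ⊕ (Fin l ⊕ Fin k)) → (Fin k ⊕ Fin l) :=
  Sum.elim Sum.inl (Sum.elim Sum.inr Sum.inl)

@[simp] lemma psi_map1 (a : Fin k ⊕ Fin l) : psi k l (Sum.map id Sum.inl a) = a := by
  cases a <;> rfl

@[simp] lemma psi_inr (a : Fin l ⊕ Fin k) : psi k l (Sum.inr a) = a.swap := by
  cases a <;> rfl

@[simp] lemma psi_inl (a : Fin k) : psi k l (Sum.inl a) = Sum.inl a := rfl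

/-- `z` lies in a through-block of `r`. -/
def thr (r : PP k l) (z : Fin k ⊕ Fin l) : Prop :=
  (∃ a, r.r z (Sum.inl a)) ∧ (∃ m, r.r z (Sum.inr m))

lemma thr_of_rel {r : PP k l} {z z' : Fin k ⊕ Fin l} (h : r.r z z') (ht : thr r z') :
    thr r z :=
  ⟨⟨ht.1.choose, r.trans h ht.1.choose_spec⟩, ⟨ht.2.choose, r.trans h ht.2.choose_spec⟩⟩

/-- Invariant bounding the relation generated in the composition `r* r`. -/
def Phi (r : PP k l) (x y : Fin k ⊕ (Fin l ⊕ Fin k)) : Prop :=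
  r.r (psi k l x) (psi k l y) ∧ (x.isLeft = y.isLeft ∨ thr r (psi k l x))

lemma Phi_equiv (r : PP k l) : Equivalence (Phi r) := by
  constructor
  · exact fun x => ⟨r.refl _, Or.inl rfl⟩
  · rintro x y ⟨h, hs⟩
    refine ⟨r.symm h, ?_⟩
    rcases hs with hs | hthr
    · exact Or.inl hs.symm
    · exact Or.inr (thr_of_rel (r.symm h) hthr)
  · rintro x y z ⟨h1, hs1⟩ ⟨h2, hs2⟩
    refine ⟨r.trans h1 h2, ?_⟩
    rcases hs1 with hs1 | hthr1
    · rcases hs2 with hs2 | hthr2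
      · exact Or.inl (hs1.trans hs2)
      · exact Or.inr (thr_of_rel h1 hthr2)
    · exact Or.inr hthr1

lemma phi_of_gen (r : PP k l) {x y} (h : midRel r (swapP r) x y) : Phi r x y := by
  rcases h with ⟨a, b, hab, hx, hy⟩ | ⟨a, b, hab, hx, hy⟩
  · subst hx; subst hy
    refine ⟨by simpa using hab, ?_⟩
    cases a with
    | inl a =>
      cases b with
      | inl b => exact Or.inl rfl
      | inr b =>
        exact Or.inr ⟨⟨a, by simpa using r.refl _⟩, ⟨b, by simpa using hab⟩⟩
    | inr a =>
      cases b with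
      | inl b =>
        exact Or.inr ⟨⟨b, by simpa using hab⟩, ⟨a, by simpa using r.refl _⟩⟩
      | inr b => exact Or.inl rfl
  · subst hx; subst hy
    refine ⟨by simpa using (show r.r a.swap b.swap from hab), Or.inl rfl⟩

lemma phi_of_eqvGen (r : PP k l) {x y}
    (h : Relation.EqvGen (midRel r (swapP r)) x y) : Phi r x y := by
  induction h with
  | rel _ _ h => exact phi_of_gen r h
  | refl => exact (Phi_equiv r).refl _
  | symm _ _ _ ih => exact (Phi_equiv r).symm ih
  | trans _ _ _ _ _ ih1 ih2 => exact (Phi_equiv r).trans ih1 ih2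

lemma compP_rel_iff (r : PP k l) (x y : Fin k ⊕ Fin k) :
    (compP (swapP r) r).r x y ↔
      Relation.EqvGen (midRel r (swapP r)) (Sum.map id Sum.inr x) (Sum.map id Sum.inr y) :=
  Iff.rfl

lemma gen1 (r : PP k l) {a b : Fin k ⊕ Fin l} (h : r.r a b) :
    Relation.EqvGen (midRel r (swapP r)) (Sum.map id Sum.inl a) (Sum.map id Sum.inl b) :=
  Relation.EqvGen.rel _ _ (Or.inl ⟨a, b, h, rfl, rfl⟩)

lemma gen2 (r : PP k l) {a b : Fin l ⊕ Fin k} (h : r.r a.swap b.swap) :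
    Relation.EqvGen (midRel r (swapP r)) (Sum.inr a) (Sum.inr b) :=
  Relation.EqvGen.rel _ _ (Or.inr ⟨a, b, h, rfl, rfl⟩)

/-- upper-upper relation of `r* r`. -/
lemma compL_ul (r : PP k l) (a b : Fin k) :
    (compP (swapP r) r).r (Sum.inl a) (Sum.inl b) ↔ r.r (Sum.inl a) (Sum.inl b) := by
  rw [compP_rel_iff]
  constructor
  · intro h
    have := (phi_of_eqvGen r h).1
    simpa using this
  · intro h
    exact gen1 r (a := Sum.inl a) (b := Sum.inl b) h

/-- lower-lower relation of `r* r`. -/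
lemma compL_lr (r : PP k l) (a b : Fin k) :
    (compP (swapP r) r).r (Sum.inr a) (Sum.inr b) ↔ r.r (Sum.inl a) (Sum.inl b) := by
  rw [compP_rel_iff]
  constructor
  · intro h
    have := (phi_of_eqvGen r h).1
    simpa using this
  · intro h
    exact gen2 r (a := Sum.inr a) (b := Sum.inr b) h

/-- cross relation of `r* r`. -/
lemma compL_cross (r : PP k l) (a b : Fin k) :
    (compP (swapP r) r).r (Sum.inl a) (Sum.inr b) ↔
      r.r (Sum.inl a) (Sum.inl b) ∧ ∃ m, r.r (Sum.inl a) (Sum.inr m) := by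
  rw [compP_rel_iff]
  constructor
  · intro h
    have hphi := phi_of_eqvGen r h
    have h1 : r.r (Sum.inl a) (Sum.inl b) := by simpa using hphi.1
    refine ⟨h1, ?_⟩
    rcases hphi.2 with hs | hthr
    · simp [Sum.isLeft] at hs
    · simpa [thr] using hthr.2
  · rintro ⟨h1, m, hm⟩
    have s1 : Relation.EqvGen (midRel r (swapP r)) (Sum.inl a) (Sum.inr (Sum.inl m)) :=
      gen1 r (a := Sum.inl a) (b := Sum.inr m) hm
    have s2 : Relation.EqvGen (midRel r (swapP r)) (Sum.inr (Sum.inl m)) (Sum.inr (Sum.inr a)) :=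
      gen2 r (a := Sum.inl m) (b := Sum.inr a) (r.symm hm)
    have s3 : Relation.EqvGen (midRel r (swapP r)) (Sum.inr (Sum.inr a)) (Sum.inr (Sum.inr b)) :=
      gen2 r (a := Sum.inr a) (b := Sum.inr b) h1
    exact (s1.trans _ _ _ s2).trans _ _ _ s3

end NCaux
namespace NCaux

variable {k l : ℕ}

def thrQuot (r : PP k l) :=
  {c : Quotient r // (∃ a : Fin k, Quotient.mk r (Sum.inl a) = c) ∧
    ∃ b : Fin l, Quotient.mk r (Sum.inr b) = c}

lemma tP_eq (r : PP k l) : tP r = Nat.card (thrQuot r) := rfl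

lemma swapP_rel (r : PP k l) (x y : Fin l ⊕ Fin k) :
    (swapP r).r x y ↔ r.r x.swap y.swap := Iff.rfl

lemma swapP_swapP (r : PP k l) : swapP (swapP r) = r := by
  apply Setoid.ext
  intro x y
  show r.r x.swap.swap y.swap.swap ↔ r.r x y
  simp

def flatten : Fin k ⊕ Fin k → Fin k ⊕ Fin l := Sum.elim Sum.inl Sum.inl

lemma comp_rel_flatten (r : PP k l) {x y : Fin k ⊕ Fin k}
    (h : (compP (swapP r) r).r x y) : r.r (flatten x) (flatten y) := by
  cases x with
  | inl a =>
    cases y with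
    | inl b => exact (compL_ul r a b).1 h
    | inr b => exact ((compL_cross r a b).1 h).1
  | inr a =>
    cases y with
    | inl b =>
      exact r.symm ((compL_cross r b a).1 ((compP (swapP r) r).symm h)).1
    | inr b => exact (compL_lr r a b).1 h

def mapQuot (r : PP k l) : Quotient (compP (swapP r) r) → Quotient r :=
  Quotient.lift (fun x => Quotient.mk r (flatten x))
    (fun _ _ h => Quotient.sound (comp_rel_flatten r h))

lemma count_comp (r : PP k l) :
    tP (compP (swapP r) r) = Nat.card (thrQuot r) := by
  set P := compP (swapP r) r with hP
  rw [tP_eq]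
  refine Nat.card_congr (Equiv.ofBijective (fun c => ⟨mapQuot r c.1, ?_⟩) ⟨?_, ?_⟩)
  · obtain ⟨c, ⟨a, ha⟩, ⟨b, hb⟩⟩ := c
    subst ha
    have hcr : P.r (Sum.inl a) (Sum.inr b) := P.symm (Quotient.exact hb)
    obtain ⟨-, m, hm⟩ := (compL_cross r a b).1 hcr
    exact ⟨⟨a, rfl⟩, ⟨m, Quotient.sound (r.symm hm)⟩⟩
  · rintro ⟨c1, ⟨a1, ha1⟩, h1⟩ ⟨c2, ⟨a2, ha2⟩, h2⟩ h
    apply Subtype.ext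
    subst ha1; subst ha2
    have h' : Quotient.mk r (Sum.inl a1) = Quotient.mk r (Sum.inl a2) :=
      congrArg Subtype.val h
    have : r.r (Sum.inl a1) (Sum.inl a2) := Quotient.exact h'
    exact Quotient.sound ((compL_ul r a1 a2).2 this)
  · rintro ⟨d, ⟨a, ha⟩, ⟨m, hm⟩⟩
    subst ha
    have hram : r.r (Sum.inl a) (Sum.inr m) := r.symm (Quotient.exact hm)
    have hcross : P.r (Sum.inl a) (Sum.inr a) :=
      (compL_cross r a a).2 ⟨r.refl _, ⟨m, hram⟩⟩
    exact ⟨⟨Quotient.mk P (Sum.inl a), ⟨a, rfl⟩,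
      ⟨a, Quotient.sound (P.symm hcross)⟩⟩, rfl⟩

def swapQuotEquiv (r : PP k l) : Quotient (swapP r) ≃ Quotient r :=
  Quotient.congr (Equiv.sumComm (Fin l) (Fin k)) (fun a b => Iff.rfl)

lemma count_swap (r : PP k l) :
    Nat.card (thrQuot (swapP r)) = Nat.card (thrQuot r) := by
  set e := swapQuotEquiv r with hedef
  refine Nat.card_congr (Equiv.subtypeEquiv e ?_)
  intro c
  induction c using Quotient.ind with
  | _ x =>
  have he : ∀ y : Fin l ⊕ Fin k,
      e (Quotient.mk (swapP r) y) = Quotient.mk r y.swap := fun y => rfl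
  constructor
  · rintro ⟨⟨b, hb⟩, ⟨a, ha⟩⟩
    exact ⟨⟨a, by rw [← ha]; exact (he (Sum.inr a)).symm⟩,
      ⟨b, by rw [← hb]; exact (he (Sum.inl b)).symm⟩⟩
  · rintro ⟨⟨a, ha⟩, ⟨b, hb⟩⟩
    refine ⟨⟨b, e.injective ?_⟩, ⟨a, e.injective ?_⟩⟩
    · rw [he]; exact hb
    · rw [he]; exact ha

lemma tP_fwd (r : PP k l) : tP (compP (swapP r) r) = tP (compP r (swapP r)) := by
  have h2 := count_comp (swapP r)
  rw [swapP_swapP] at h2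
  rw [count_comp r, h2, count_swap]

end NCaux
namespace NCaux

variable {k : ℕ}

lemma rel_comm {α} (s : Setoid α) (x y : α) : s.r x y ↔ s.r y x :=
  ⟨s.symm, s.symm⟩

lemma proj_comp {p : PP k k} (hp : isProjective p) : compP (swapP p) p = p := by
  rw [hp.1]; exact hp.2

/-- The set of upper points lying in a through-block. -/
def Tp (p : PP k k) (a : Fin k) : Prop := ∃ m, p.r (Sum.inl a) (Sum.inr m)

lemma Tp_of_rel {p : PP k k} {a b : Fin k} (h : p.r (Sum.inl a) (Sum.inl b))
    (hb : Tp p b) : Tp p a := ⟨hb.choose, p.trans h hb.choose_spec⟩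

lemma cross_iff {p : PP k k} (hp : isProjective p) (a b : Fin k) :
    p.r (Sum.inl a) (Sum.inr b) ↔ p.r (Sum.inl a) (Sum.inl b) ∧ Tp p a := by
  have h := compL_cross p a b
  rw [proj_comp hp] at h
  exact h

lemma lower_iff {p : PP k k} (hp : isProjective p) (a b : Fin k) :
    p.r (Sum.inr a) (Sum.inr b) ↔ p.r (Sum.inl a) (Sum.inl b) := by
  have h := compL_lr p a b
  rw [proj_comp hp] at h
  exact h

open Classical in
/-- The minimum of the (upper) block of `a`. -/
noncomputable def mMin (p : PP k k) (a : Fin k) : Fin k :=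
  (Finset.univ.filter (fun b => p.r (Sum.inl a) (Sum.inl b))).min'
    ⟨a, Finset.mem_filter.2 ⟨Finset.mem_univ _, p.refl _⟩⟩

lemma mMin_rel (p : PP k k) (a : Fin k) : p.r (Sum.inl a) (Sum.inl (mMin p a)) := by
  classical
  have h := Finset.min'_mem (Finset.univ.filter (fun b => p.r (Sum.inl a) (Sum.inl b)))
    ⟨a, Finset.mem_filter.2 ⟨Finset.mem_univ _, p.refl _⟩⟩
  simp only [Finset.mem_filter] at h
  exact h.2

lemma mMin_le {p : PP k k} {a b : Fin k} (h : p.r (Sum.inl a) (Sum.inl b)) :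
    mMin p a ≤ b := by
  classical
  exact Finset.min'_le _ _ (by simp [h])

lemma mMin_congr {p : PP k k} {a b : Fin k} (h : p.r (Sum.inl a) (Sum.inl b)) :
    mMin p a = mMin p b := by
  have h1 : mMin p a ≤ mMin p b := mMin_le (p.trans h (mMin_rel p b))
  have h2 : mMin p b ≤ mMin p a := mMin_le (p.trans (p.symm h) (mMin_rel p a))
  exact le_antisymm h1 h2

lemma mMin_self_le (p : PP k k) (a : Fin k) : mMin p a ≤ a := mMin_le (p.refl _)

open Classical in
/-- The set of minima of through-blocks. -/
noncomputable def Mset (p : PP k k) : Finset (Fin k) :=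
  (Finset.univ.filter (Tp p)).image (mMin p)

lemma mem_Mset_of {p : PP k k} {a : Fin k} (ha : Tp p a) : mMin p a ∈ Mset p := by
  classical
  exact Finset.mem_image.2 ⟨a, by simp [ha], rfl⟩

lemma Mset_spec {p : PP k k} {v : Fin k} (hv : v ∈ Mset p) :
    Tp p v ∧ mMin p v = v := by
  classical
  obtain ⟨a, ha, hav⟩ := Finset.mem_image.1 hv
  simp only [Finset.mem_filter] at ha
  have hrel : p.r (Sum.inl a) (Sum.inl v) := hav ▸ mMin_rel p a
  exact ⟨Tp_of_rel (p.symm hrel) ha.2, (mMin_congr hrel).symm.trans hav⟩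

lemma card_Mset {p : PP k k} (hp : isProjective p) : tP p = (Mset p).card := by
  rw [tP_eq]
  have : Nat.card (thrQuot p) = Nat.card ↥(Mset p) := by
    refine Nat.card_congr (Equiv.symm (Equiv.ofBijective
      (fun v => ⟨Quotient.mk p (Sum.inl v.1), ⟨v.1, rfl⟩,
        ⟨v.1, Quotient.sound (p.symm ((cross_iff hp v.1 v.1).2
          ⟨p.refl _, (Mset_spec v.2).1⟩))⟩⟩) ⟨?_, ?_⟩))
    · rintro ⟨v, hv⟩ ⟨w, hw⟩ h
      have h' : Quotient.mk p (Sum.inl v) = Quotient.mk p (Sum.inl w) :=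
        congrArg Subtype.val h
      have hrel : p.r (Sum.inl v) (Sum.inl w) := Quotient.exact h'
      have : mMin p v = mMin p w := mMin_congr hrel
      apply Subtype.ext
      show v = w
      rw [← (Mset_spec hv).2, ← (Mset_spec hw).2, this]
    · rintro ⟨c, ⟨a, ha⟩, ⟨b, hb⟩⟩
      have hcr : p.r (Sum.inl a) (Sum.inr b) := Quotient.exact (ha.trans hb.symm)
      have hTa : Tp p a := ⟨b, hcr⟩
      refine ⟨⟨mMin p a, mem_Mset_of hTa⟩, Subtype.ext ?_⟩
      show Quotient.mk p (Sum.inl (mMin p a)) = c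
      rw [← ha]
      exact Quotient.sound (p.symm (mMin_rel p a))
  rw [this, Nat.card_eq_fintype_card, Fintype.card_coe]

/-- A basic consequence of noncrossingness: a through-point strictly between two
related points must be related to them. -/
lemma nc_upper_cross {p : PP k k} (hp : isProjective p) (hnc : isNC p)
    {u1 u2 u3 : Fin k} (h12 : u1 < u2) (h23 : u2 < u3)
    (h13 : p.r (Sum.inl u1) (Sum.inl u3)) (h2T : Tp p u2)
    (hn : ¬ p.r (Sum.inl u1) (Sum.inl u2)) : False := by
  apply hnc
  refine ⟨Sum.inl u1, Sum.inl u2, Sum.inl u3, Sum.inr u2, ?_, ?_, ?_, h13, ?_, hn⟩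
  · simpa [posP] using h12
  · simpa [posP] using h23
  · have h3 := u3.isLt
    simp only [posP, Sum.elim_inl, Sum.elim_inr]
    omega
  · exact (cross_iff hp u2 u2).2 ⟨p.refl _, h2T⟩

lemma mMin_lt {p : PP k k} (hp : isProjective p) (hnc : isNC p) {a b : Fin k}
    (ha : Tp p a) (hne : ¬ p.r (Sum.inl a) (Sum.inl b)) (hab : a < b) :
    mMin p a < mMin p b := by
  by_contra hcon
  push_neg at hcon
  have hm1 : p.r (Sum.inl a) (Sum.inl (mMin p a)) := mMin_rel p a
  have hm2 : p.r (Sum.inl b) (Sum.inl (mMin p b)) := mMin_rel p b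
  have hne' : mMin p b ≠ mMin p a := by
    intro h
    exact hne (p.trans hm1 (p.symm (h ▸ hm2)))
  have hlt : mMin p b < mMin p a := lt_of_le_of_ne hcon hne'
  have hTa' : Tp p (mMin p a) := Tp_of_rel (p.symm hm1) ha
  refine nc_upper_cross hp hnc hlt (lt_of_le_of_lt (mMin_self_le p a) hab)
    (p.symm hm2) hTa' ?_
  intro h
  exact hne (p.trans hm1 (p.trans (p.symm h) (p.symm hm2)))

/-- The index of the through-block of `a` in the left-to-right order. -/
noncomputable def iota (p : PP k k) {t : ℕ} (h : (Mset p).card = t)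
    (a : Fin k) (ha : Tp p a) : Fin t :=
  (Finset.orderIsoOfFin (Mset p) h).symm ⟨mMin p a, mem_Mset_of ha⟩

lemma iota_eq_iff {p : PP k k} {t : ℕ} (h : (Mset p).card = t)
    {a b : Fin k} (ha : Tp p a) (hb : Tp p b) :
    iota p h a ha = iota p h b hb ↔ p.r (Sum.inl a) (Sum.inl b) := by
  constructor
  · intro he
    have := (Finset.orderIsoOfFin (Mset p) h).symm.injective he
    have hmm : mMin p a = mMin p b := congrArg Subtype.val this
    exact p.trans (mMin_rel p a) (p.symm (hmm ▸ mMin_rel p b))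
  · intro hrel
    unfold iota
    congr 1
    exact Subtype.ext (mMin_congr hrel)

lemma iota_lt {p : PP k k} (hp : isProjective p) (hnc : isNC p) {t : ℕ}
    (h : (Mset p).card = t) {a b : Fin k} (ha : Tp p a) (hb : Tp p b)
    (hne : ¬ p.r (Sum.inl a) (Sum.inl b)) (hab : a < b) :
    iota p h a ha < iota p h b hb := by
  have hmm : mMin p a < mMin p b := mMin_lt hp hnc ha hne hab
  exact (Finset.orderIsoOfFin (Mset p) h).symm.strictMono (Subtype.mk_lt_mk.2 hmm)

lemma iota_surj (p : PP k k) {t : ℕ} (h : (Mset p).card = t) (i : Fin t) :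
    ∃ a, ∃ ha : Tp p a, iota p h a ha = i := by
  set v := Finset.orderIsoOfFin (Mset p) h i with hv
  obtain ⟨hT, hfix⟩ := Mset_spec v.2
  refine ⟨v.1, hT, ?_⟩
  unfold iota
  have : (⟨mMin p v.1, mem_Mset_of hT⟩ : ↥(Mset p)) = v := Subtype.ext hfix
  rw [this, hv, OrderIso.symm_apply_apply]

end NCaux
namespace NCaux

variable {k l : ℕ} (p : PP k k) (q : PP l l) {t : ℕ}

/-- The candidate equivalence relation for the connecting partition `r`. -/
def Rrel (hcp : (Mset p).card = t) (hcq : (Mset q).card = t) :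
    (Fin k ⊕ Fin l) → (Fin k ⊕ Fin l) → Prop := fun x y =>
  match x, y with
  | Sum.inl a, Sum.inl b => p.r (Sum.inl a) (Sum.inl b)
  | Sum.inr a, Sum.inr b => q.r (Sum.inl a) (Sum.inl b)
  | Sum.inl a, Sum.inr b => ∃ (ha : Tp p a) (hb : Tp q b), iota p hcp a ha = iota q hcq b hb
  | Sum.inr b, Sum.inl a => ∃ (ha : Tp p a) (hb : Tp q b), iota p hcp a ha = iota q hcq b hb

variable (hcp : (Mset p).card = t) (hcq : (Mset q).card = t)

lemma Rrel_equivalence : Equivalence (Rrel p q hcp hcq) := by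
  constructor
  · intro x
    cases x with
    | inl a => exact p.refl _
    | inr b => exact q.refl _
  · intro x y h
    cases x <;> cases y
    · exact p.symm h
    · exact h
    · exact h
    · exact q.symm h
  · intro x y z h1 h2
    cases x with
    | inl a =>
      cases y with
      | inl b =>
        cases z with
        | inl c => exact p.trans h1 h2
        | inr c =>
          obtain ⟨hb, hc, e⟩ := h2
          exact ⟨Tp_of_rel h1 hb, hc,
            ((iota_eq_iff hcp (Tp_of_rel h1 hb) hb).2 h1).trans e⟩
      | inr b =>
        cases z with
        | inl c =>
          obtain ⟨ha, hb, e1⟩ := h1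
          obtain ⟨hc, hb2, e2⟩ := h2
          exact (iota_eq_iff hcp ha hc).1 (e1.trans e2.symm)
        | inr c =>
          obtain ⟨ha, hb, e1⟩ := h1
          exact ⟨ha, Tp_of_rel (q.symm h2) hb,
            e1.trans ((iota_eq_iff hcq hb (Tp_of_rel (q.symm h2) hb)).2 h2)⟩
    | inr a =>
      cases y with
      | inl b =>
        cases z with
        | inl c =>
          obtain ⟨hb, ha, e⟩ := h1
          exact ⟨Tp_of_rel (p.symm h2) hb, ha,
            ((iota_eq_iff hcp (Tp_of_rel (p.symm h2) hb) hb).2 (p.symm h2)).trans e⟩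
        | inr c =>
          obtain ⟨hb, ha, e1⟩ := h1
          obtain ⟨hb2, hc, e2⟩ := h2
          exact (iota_eq_iff hcq ha hc).1 (e1.symm.trans e2)
      | inr b =>
        cases z with
        | inl c =>
          obtain ⟨hc, hb, e⟩ := h2
          exact ⟨hc, Tp_of_rel h1 hb,
            e.trans ((iota_eq_iff hcq hb (Tp_of_rel h1 hb)).2 (q.symm h1))⟩
        | inr c => exact q.trans h1 h2

/-- The connecting partition. -/
def buildR : PP k l := ⟨Rrel p q hcp hcq, Rrel_equivalence p q hcp hcq⟩

lemma buildR_thr_left (a : Fin k) :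
    (∃ m : Fin l, (buildR p q hcp hcq).r (Sum.inl a) (Sum.inr m)) ↔ Tp p a := by
  constructor
  · rintro ⟨m, ha, hm, e⟩
    exact ha
  · intro ha
    obtain ⟨b, hb, he⟩ := iota_surj q hcq (iota p hcp a ha)
    exact ⟨b, ha, hb, he.symm⟩

lemma buildR_thr_right (b : Fin l) :
    (∃ m : Fin k, (swapP (buildR p q hcp hcq)).r (Sum.inl b) (Sum.inr m)) ↔ Tp q b := by
  constructor
  · rintro ⟨m, hm, hb, e⟩
    exact hb
  · intro hb
    obtain ⟨a, ha, he⟩ := iota_surj p hcp (iota q hcq b hb)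
    exact ⟨a, ha, hb, he⟩

lemma buildR_comp1 (hp : isProjective p) :
    compP (swapP (buildR p q hcp hcq)) (buildR p q hcp hcq) = p := by
  apply Setoid.ext
  intro x y
  have key : ∀ (a : Fin k) (b : Fin k),
      ((compP (swapP (buildR p q hcp hcq)) (buildR p q hcp hcq)).r
        (Sum.inl a) (Sum.inr b) ↔ p.r (Sum.inl a) (Sum.inr b)) := by
    intro a b
    rw [compL_cross, cross_iff hp]
    exact and_congr Iff.rfl (buildR_thr_left p q hcp hcq a)
  cases x with
  | inl a =>
    cases y with
    | inl b => exact compL_ul _ a b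
    | inr b => exact key a b
  | inr a =>
    cases y with
    | inl b =>
      rw [rel_comm _ (Sum.inr a) (Sum.inl b), rel_comm p (Sum.inr a) (Sum.inl b)]
      exact key b a
    | inr b =>
      rw [compL_lr, lower_iff hp]
      exact Iff.rfl

lemma buildR_comp2 (hq : isProjective q) :
    compP (buildR p q hcp hcq) (swapP (buildR p q hcp hcq)) = q := by
  have hrw : compP (buildR p q hcp hcq) (swapP (buildR p q hcp hcq)) =
      compP (swapP (swapP (buildR p q hcp hcq))) (swapP (buildR p q hcp hcq)) := by
    rw [swapP_swapP]
  rw [hrw]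
  apply Setoid.ext
  intro x y
  have key : ∀ (a : Fin l) (b : Fin l),
      ((compP (swapP (swapP (buildR p q hcp hcq))) (swapP (buildR p q hcp hcq))).r
        (Sum.inl a) (Sum.inr b) ↔ q.r (Sum.inl a) (Sum.inr b)) := by
    intro a b
    rw [compL_cross, cross_iff hq]
    exact and_congr Iff.rfl (buildR_thr_right p q hcp hcq a)
  cases x with
  | inl a =>
    cases y with
    | inl b => exact compL_ul _ a b
    | inr b => exact key a b
  | inr a =>
    cases y with
    | inl b =>
      rw [rel_comm _ (Sum.inr a) (Sum.inl b), rel_comm q (Sum.inr a) (Sum.inl b)]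
      exact key b a
    | inr b =>
      rw [compL_lr, lower_iff hq]
      exact Iff.rfl

end NCaux
namespace NCaux

variable {k l : ℕ} (p : PP k k) (q : PP l l) {t : ℕ}
  (hcp : (Mset p).card = t) (hcq : (Mset q).card = t)

lemma buildR_nc (hp : isProjective p) (hq : isProjective q)
    (hpnc : isNC p) (hqnc : isNC q) : isNC (buildR p q hcp hcq) := by
  rintro ⟨x1, x2, x3, x4, h12, h23, h34, r13, r24, hn12⟩
  cases x1 with
  | inl a1 =>
    cases x2 with
    | inl a2 =>
      cases x3 with
      | inl a3 =>
        cases x4 with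
        | inl a4 =>
          simp only [posP, Sum.elim_inl, Sum.elim_inr] at h12 h23 h34
          exact hpnc ⟨Sum.inl a1, Sum.inl a2, Sum.inl a3, Sum.inl a4,
            by simpa [posP] using h12, by simpa [posP] using h23,
            by simpa [posP] using h34, r13, r24, hn12⟩
        | inr b4 =>
          simp only [posP, Sum.elim_inl, Sum.elim_inr] at h12 h23 h34
          obtain ⟨ha2, hb4, e24⟩ := r24
          exact nc_upper_cross hp hpnc (Fin.lt_def.mpr h12) (Fin.lt_def.mpr h23)
            r13 ha2 hn12
      | inr b3 =>
        cases x4 with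
        | inl a4 =>
          simp only [posP, Sum.elim_inl, Sum.elim_inr] at h12 h23 h34
          have := a4.isLt
          omega
        | inr b4 =>
          simp only [posP, Sum.elim_inl, Sum.elim_inr] at h12 h23 h34
          obtain ⟨ha1, hb3, e13⟩ := r13
          obtain ⟨ha2, hb4, e24⟩ := r24
          have hb43 : b4 < b3 := by
            have := b3.isLt
            have := b4.isLt
            exact Fin.lt_def.mpr (by omega)
          have hlt : iota q hcq b3 hb3 < iota q hcq b4 hb4 := by
            have h := iota_lt hp hpnc hcp ha1 ha2 hn12 (Fin.lt_def.mpr h12)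
            rwa [e13, e24] at h
          have hne34 : ¬ q.r (Sum.inl b4) (Sum.inl b3) := by
            intro hrel
            exact absurd ((iota_eq_iff hcq hb4 hb3).2 hrel) (ne_of_gt hlt)
          exact lt_asymm hlt (iota_lt hq hqnc hcq hb4 hb3 hne34 hb43)
    | inr b2 =>
      cases x3 with
      | inl a3 =>
        simp only [posP, Sum.elim_inl, Sum.elim_inr] at h23
        have := a3.isLt
        omega
      | inr b3 =>
        cases x4 with
        | inl a4 =>
          simp only [posP, Sum.elim_inl, Sum.elim_inr] at h12 h23 h34
          have := a4.isLt
          omega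
        | inr b4 =>
          simp only [posP, Sum.elim_inl, Sum.elim_inr] at h12 h23 h34
          obtain ⟨ha1, hb3, e13⟩ := r13
          have hb32 : b3 < b2 := by
            have := b2.isLt
            have := b3.isLt
            exact Fin.lt_def.mpr (by omega)
          have hb43 : b4 < b3 := by
            have := b3.isLt
            have := b4.isLt
            exact Fin.lt_def.mpr (by omega)
          refine nc_upper_cross hq hqnc hb43 hb32 (q.symm r24) hb3 ?_
          intro hrel
          have h23' : q.r (Sum.inl b2) (Sum.inl b3) := q.trans r24 hrel
          have hb2 : Tp q b2 := Tp_of_rel h23' hb3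
          exact hn12 ⟨ha1, hb2, e13.trans ((iota_eq_iff hcq hb2 hb3).2 h23').symm⟩
  | inr b1 =>
    cases x2 with
    | inl a2 =>
      simp only [posP, Sum.elim_inl, Sum.elim_inr] at h12
      have := a2.isLt
      omega
    | inr b2 =>
      cases x3 with
      | inl a3 =>
        simp only [posP, Sum.elim_inl, Sum.elim_inr] at h23
        have := a3.isLt
        omega
      | inr b3 =>
        cases x4 with
        | inl a4 =>
          simp only [posP, Sum.elim_inl, Sum.elim_inr] at h12 h23 h34
          have := a4.isLt
          omega
        | inr b4 =>
          simp only [posP, Sum.elim_inl, Sum.elim_inr] at h12 h23 h34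
          have hb1 := b1.isLt
          have hb2 := b2.isLt
          have hb3 := b3.isLt
          have hb4 := b4.isLt
          refine hqnc ⟨Sum.inl b4, Sum.inl b3, Sum.inl b2, Sum.inl b1,
            by simp only [posP, Sum.elim_inl]; omega,
            by simp only [posP, Sum.elim_inl]; omega,
            by simp only [posP, Sum.elim_inl]; omega,
            q.symm r24, q.symm r13, ?_⟩
          intro h
          exact hn12 (q.trans r13 (q.trans (q.symm h) (q.symm r24)))

end NCaux
/-- in the category `NC`, two projective partitions are equivalent iff
they have the same number of through-blocks. -/
theorem nc_equivalence_iff_through_blocks {k l : ℕ} (p : PP k k) (q : PP l l)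
    (hp : isProjective p) (hq : isProjective q) (hpnc : isNC p) (hqnc : isNC q) :
    (∃ r : PP k l, isNC r ∧ compP (swapP r) r = p ∧ compP r (swapP r) = q) ↔
      tP p = tP q := by
  constructor
  · rintro ⟨r, -, hrp, hrq⟩
    rw [← hrp, ← hrq]
    exact NCaux.tP_fwd r
  · intro hpq
    have hcp : (NCaux.Mset p).card = tP p := (NCaux.card_Mset hp).symm
    have hcq : (NCaux.Mset q).card = tP p := by
      rw [hpq]
      exact (NCaux.card_Mset hq).symm
    exact ⟨NCaux.buildR p q hcp hcq, NCaux.buildR_nc p q hcp hcq hp hq hpnc hqnc,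
      NCaux.buildR_comp1 p q hcp hcq hp, NCaux.buildR_comp2 p q hcp hcq hq⟩
end
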